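/- Let X be a Hadamard space and ξ ∈ ∂∞X. On the set of geodesic rays asymptotic to ξ, the asymptotic distance d_ξ(ρ₁,ρ₂) = inf_{t₁,t₂→∞} d(ρ₁(t₁),ρ₂(t₂)) induces a metric on the set X*_ξ of strong asymptote classes, and the metric completion X_ξ of X*_ξ is a Hadamard space. -/

import Mathlib

/-!
Common geometric background definitions for formalizing results of
B. Leeb, "A characterization of irreducible symmetric spaces and Euclidean
buildings of higher rank by their asymptotic geometry".

Hadamard spaces are formalized as complete geodesic metric spaces satisfying
the CN-inequality of Bruhat–Tits (the CAT(0) comparison condition).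
The ideal boundary is the set of asymptote classes of unit-speed geodesic
rays, equipped with the quotient of the topology of pointwise convergence
of rays (the cone topology).  The Tits metric is the supremum over base
points of the Alexandrov angle between representing rays.
-/

noncomputable section

open Metric Set

universe u v w

namespace CAT0Geo

/-! ## Geodesics -/

/-- `γ` is a unit speed geodesic on the subset `s` of `ℝ`. -/
def IsGeodesicOn {X : Type u} [MetricSpace X] (γ : ℝ → X) (s : Set ℝ) : Prop :=
  ∀ ⦃t₁ : ℝ⦄, t₁ ∈ s → ∀ ⦃t₂ : ℝ⦄, t₂ ∈ s → dist (γ t₁) (γ t₂) = |t₁ - t₂|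

/-- A unit speed geodesic segment defined on `[a,b]`. -/
def IsGeodesicSegment {X : Type u} [MetricSpace X] (γ : ℝ → X) (a b : ℝ) : Prop :=
  IsGeodesicOn γ (Set.Icc a b)

/-- A unit speed geodesic ray (defined on `[0,∞)`). -/
def IsGeodesicRay {X : Type u} [MetricSpace X] (ρ : ℝ → X) : Prop :=
  IsGeodesicOn ρ (Set.Ici 0)

/-- A complete unit speed geodesic. -/
def IsGeodesicLine {X : Type u} [MetricSpace X] (c : ℝ → X) : Prop :=
  IsGeodesicOn c Set.univ

/-- A geodesic metric space: any two points are joined by a geodesic segment. -/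
def GeodesicSpace (X : Type u) [MetricSpace X] : Prop :=
  ∀ x y : X, ∃ γ : ℝ → X, IsGeodesicSegment γ 0 (dist x y) ∧ γ 0 = x ∧ γ (dist x y) = y

/-- The CAT(0) comparison condition, in the form of the CN-inequality of
Bruhat and Tits (for midpoints). -/
def CAT0 (X : Type u) [MetricSpace X] : Prop :=
  ∀ x y z m : X, dist y m = dist y z / 2 → dist m z = dist y z / 2 →
    dist x m ^ 2 ≤ (dist x y ^ 2 + dist x z ^ 2) / 2 - dist y z ^ 2 / 4

/-- A Hadamard space: a complete geodesic metric space which is nonpositively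
curved in the global sense of CAT(0) distance comparison. -/
structure HadamardSpace (X : Type u) [MetricSpace X] : Prop where
  complete : CompleteSpace X
  geodesic : GeodesicSpace X
  cat0 : CAT0 X

/-- Every geodesic segment is contained in a complete geodesic
("extendible geodesic segments / extendible rays / geodesic completeness"). -/
def GeodesicallyComplete (X : Type u) [MetricSpace X] : Prop :=
  ∀ (γ : ℝ → X) (a b : ℝ), a ≤ b → IsGeodesicSegment γ a b →
    ∃ c : ℝ → X, IsGeodesicLine c ∧ ∀ t ∈ Set.Icc a b, c t = γ t

/-- Convexity of a subset of a metric space: it contains all geodesic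
segments between its points. -/
def GeodConvex {X : Type u} [MetricSpace X] (C : Set X) : Prop :=
  ∀ (γ : ℝ → X) (a b : ℝ), a ≤ b → IsGeodesicSegment γ a b →
    γ a ∈ C → γ b ∈ C → ∀ t ∈ Set.Icc a b, γ t ∈ C

/-! ## The ideal boundary -/

/-- The space of unit speed geodesic rays in `X`, topologized (as a subspace of
the product `ℝ → X`) by pointwise convergence; on geodesic rays this coincides
with uniform convergence on compact subsets. -/
def Rays (X : Type u) [MetricSpace X] : Type u := {ρ : ℝ → X // IsGeodesicRay ρ}

instance raysTopology (X : Type u) [MetricSpace X] : TopologicalSpace (Rays X) :=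
  inferInstanceAs (TopologicalSpace {ρ : ℝ → X // IsGeodesicRay ρ})

/-- Two rays are asymptotic if they are at bounded distance. -/
def asymp (X : Type u) [MetricSpace X] : Rays X → Rays X → Prop := fun ρ₁ ρ₂ =>
  ∃ C : ℝ, ∀ t : ℝ, 0 ≤ t → dist (ρ₁.1 t) (ρ₂.1 t) ≤ C

/-- The ideal (geometric) boundary `∂∞X`: asymptote classes of geodesic rays,
equipped with the cone topology (quotient topology from the space of rays). -/
def IdealBoundary (X : Type u) [MetricSpace X] : Type u := Quot (asymp X)

instance idealBoundaryTopology (X : Type u) [MetricSpace X] :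
    TopologicalSpace (IdealBoundary X) :=
  inferInstanceAs (TopologicalSpace (Quot (asymp X)))

/-- The asymptote class of a geodesic ray. -/
def rayClass {X : Type u} [MetricSpace X] (ρ : Rays X) : IdealBoundary X := Quot.mk _ ρ

/-- The set of ideal boundary points of a subset `C ⊆ X`: classes of rays
running inside `C`. -/
def setBoundary {X : Type u} [MetricSpace X] (C : Set X) : Set (IdealBoundary X) :=
  {ξ | ∃ ρ : Rays X, (∀ t : ℝ, 0 ≤ t → ρ.1 t ∈ C) ∧ rayClass ρ = ξ}

/-- The boundary map induced by an isometric equivalence. -/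
def bdryMap {X : Type u} {Y : Type v} [MetricSpace X] [MetricSpace Y] (g : X ≃ᵢ Y) :
    IdealBoundary X → IdealBoundary Y :=
  Quot.map
    (fun ρ => ⟨fun t => g (ρ.1 t), fun _ hu _ hv => by
      rw [g.isometry.dist_eq]; exact ρ.2 hu hv⟩)
    (fun ρ₁ ρ₂ h => by
      obtain ⟨C, hC⟩ := h
      exact ⟨C, fun t ht => by rw [g.isometry.dist_eq]; exact hC t ht⟩)

/-- The boundary map induced by the inclusion of a subset `C ⊆ Y`. -/
def inclBoundaryMap {Y : Type u} [MetricSpace Y] (C : Set Y) :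
    IdealBoundary (↥C) → IdealBoundary Y :=
  Quot.map
    (fun ρ => ⟨fun t => ((ρ.1 t : ↥C) : Y), fun u hu v hv => by
      have h := ρ.2 hu hv
      rwa [Subtype.dist_eq] at h⟩)
    (fun ρ₁ ρ₂ h => by
      obtain ⟨c, hc⟩ := h
      refine ⟨c, fun t ht => ?_⟩
      have h' := hc t ht
      rwa [Subtype.dist_eq] at h')

/-- The boundary map induced by a homothety with scale factor `a`. -/
def homothetyBdryMap {X : Type u} {Y : Type v} [MetricSpace X] [MetricSpace Y]
    (Φ : X → Y) (a : ℝ) (ha : 0 < a) (hΦ : ∀ x y, dist (Φ x) (Φ y) = a * dist x y) :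
    IdealBoundary X → IdealBoundary Y :=
  Quot.map
    (fun ρ => ⟨fun t => Φ (ρ.1 (t / a)), by
      intro u hu v hv
      have hu0 : (0:ℝ) ≤ u := hu
      have hv0 : (0:ℝ) ≤ v := hv
      have hu' : (0:ℝ) ≤ u / a := div_nonneg hu0 ha.le
      have hv' : (0:ℝ) ≤ v / a := div_nonneg hv0 ha.le
      rw [hΦ, ρ.2 hu' hv', div_sub_div_same, abs_div, abs_of_pos ha]
      field_simp⟩)
    (fun ρ₁ ρ₂ h => by
      obtain ⟨C, hC⟩ := h
      refine ⟨a * C, fun t ht => ?_⟩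
      rw [hΦ]
      exact mul_le_mul_of_nonneg_left (hC (t / a) (div_nonneg ht ha.le)) ha.le)

/-! ## Angles and the Tits metric -/

/-- The comparison angle at `x` of the triangle `(x,y,z)`. -/
def cangle {X : Type u} [MetricSpace X] (x y z : X) : ℝ :=
  Real.arccos ((dist x y ^ 2 + dist x z ^ 2 - dist y z ^ 2) / (2 * dist x y * dist x z))

/-- The (Alexandrov) angle between two rays with the same initial point,
computed (in a CAT(0) space) as the infimum of comparison angles. -/
def rayAngle {X : Type u} [MetricSpace X] (ρ₁ ρ₂ : ℝ → X) : ℝ :=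
  ⨅ p : {p : ℝ × ℝ // 0 < p.1 ∧ 0 < p.2}, cangle (ρ₁ 0) (ρ₁ p.1.1) (ρ₂ p.1.2)

/-- The Alexandrov angle at `x` between the geodesic segments `[x,y]` and `[x,z]`,
computed (in a CAT(0) space) as the infimum of comparison angles over points
on the two segments. -/
def alexAngle {X : Type u} [MetricSpace X] (x y z : X) : ℝ :=
  ⨅ p : {p : X × X // p.1 ≠ x ∧ p.2 ≠ x ∧ dist x p.1 + dist p.1 y = dist x y ∧
      dist x p.2 + dist p.2 z = dist x z}, cangle x p.1.1 p.1.2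

/-- The Tits angle metric on the ideal boundary:
`∠Tits(ξ,η) = sup_{x ∈ X} ∠ₓ(ξ,η)`. -/
def titsDist (X : Type u) [MetricSpace X] : IdealBoundary X → IdealBoundary X → ℝ :=
  fun ξ η => sSup {a : ℝ | ∃ ρ₁ ρ₂ : Rays X, ρ₁.1 0 = ρ₂.1 0 ∧
    rayClass ρ₁ = ξ ∧ rayClass ρ₂ = η ∧ a = rayAngle ρ₁.1 ρ₂.1}

/-- `X` has at least three ideal boundary points. -/
def ThreeBoundaryPoints (X : Type u) [MetricSpace X] : Prop :=
  ∃ ξ₁ ξ₂ ξ₃ : IdealBoundary X, ξ₁ ≠ ξ₂ ∧ ξ₁ ≠ ξ₃ ∧ ξ₂ ≠ ξ₃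

/-! ## Busemann functions, types of isometries -/

/-- The Busemann function of the ray `ρ`; for a geodesic ray the defining
expression is non-increasing in `t`, so the limit is an infimum. -/
def busemann {X : Type u} [MetricSpace X] (ρ : ℝ → X) (x : X) : ℝ :=
  ⨅ t : {t : ℝ // 0 ≤ t}, (dist x (ρ t.1) - t.1)

/-- An axial isometry: its displacement function attains a positive minimum. -/
def IsAxialIsometry {X : Type u} [MetricSpace X] (g : X ≃ᵢ X) : Prop :=
  ∃ x : X, 0 < dist x (g x) ∧ ∀ y : X, dist x (g x) ≤ dist y (g y)

/-- `g` preserves every horosphere centered at the ideal point `ξ`. -/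
def PreservesHorospheresAt {X : Type u} [MetricSpace X] (g : X ≃ᵢ X)
    (ξ : IdealBoundary X) : Prop :=
  ∀ ρ : Rays X, rayClass ρ = ξ → ∀ x : X, busemann ρ.1 (g x) = busemann ρ.1 x

/-- Membership in the parabolic stabilizer `P_ξ` of a set `H` of isometries:
the elliptic and parabolic (i.e. non-axial) isometries in `H` preserving every
horosphere centered at `ξ`. -/
def InParabolicStabilizer {X : Type u} [MetricSpace X] (H : Set (X ≃ᵢ X))
    (g : X ≃ᵢ X) (ξ : IdealBoundary X) : Prop :=
  g ∈ H ∧ ¬ IsAxialIsometry g ∧ PreservesHorospheresAt g ξ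

/-! ## Products, trees, branching -/

/-- `f` realizes `X` as the metric product `Y × Z` (distances combined in the
Euclidean / ℓ² way). -/
def IsL2ProductMap {X : Type u} {Y : Type v} {Z : Type w} [MetricSpace X]
    [MetricSpace Y] [MetricSpace Z] (f : X → Y × Z) : Prop :=
  Function.Bijective f ∧
    ∀ a b : X, dist a b ^ 2 = dist (f a).1 (f b).1 ^ 2 + dist (f a).2 (f b).2 ^ 2

/-- `X` is isometric to the metric product of `Y` and `Z`. -/
def IsMetricProductOf (X : Type u) (Y : Type v) (Z : Type w) [MetricSpace X]
    [MetricSpace Y] [MetricSpace Z] : Prop :=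
  ∃ f : X → Y × Z, IsL2ProductMap f

/-- A metric tree: a geodesic space which is 0-hyperbolic (all geodesic
triangles are tripods). -/
def MetricTree (T : Type u) [MetricSpace T] : Prop :=
  GeodesicSpace T ∧ ∀ x y z w : T,
    dist x y + dist z w ≤ max (dist x z + dist y w) (dist x w + dist y z)

/-- A branch point of a tree: three segments issue from it in pairwise
"opposite" directions. -/
def IsBranchPoint {T : Type u} [MetricSpace T] (v : T) : Prop :=
  ∃ x y z : T, x ≠ v ∧ y ≠ v ∧ z ≠ v ∧
    dist x y = dist x v + dist v y ∧ dist x z = dist x v + dist v z ∧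
    dist y z = dist y v + dist v z

/-- All edges (distances between branch points) of the tree are multiples of a
fixed positive length. -/
def EqualEdgeLengths (T : Type u) [MetricSpace T] : Prop :=
  ∃ L : ℝ, 0 < L ∧ ∀ v w : T, IsBranchPoint v → IsBranchPoint w →
    ∃ n : ℕ, dist v w = n * L

/-- Two distinct complete geodesics branch: they share a geodesic ray. -/
def LinesBranch {X : Type u} [MetricSpace X] (c₁ c₂ : ℝ → X) : Prop :=
  IsGeodesicLine c₁ ∧ IsGeodesicLine c₂ ∧ Set.range c₁ ≠ Set.range c₂ ∧
    ∃ ρ : ℝ → X, IsGeodesicRay ρ ∧ ρ '' Set.Ici 0 ⊆ Set.range c₁ ∧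
      ρ '' Set.Ici 0 ⊆ Set.range c₂

/-- Some complete geodesics in `X` branch. -/
def HasBranchingGeodesics (X : Type u) [MetricSpace X] : Prop :=
  ∃ c₁ c₂ : ℝ → X, LinesBranch c₁ c₂

/-- `X` has no Euclidean de Rham factor: it does not split off a factor `ℝ`. -/
def HasEuclideanDeRhamFactor (X : Type u) [MetricSpace X] : Prop :=
  ∃ (Z : Type u) (iZ : MetricSpace Z), @IsMetricProductOf X ℝ Z _ _ iZ

/-- `X` is irreducible: it admits no metric product decomposition with two
nontrivial factors. -/
def IsIrreducibleSpace (X : Type u) [MetricSpace X] : Prop :=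
  ¬ ∃ (Y : Type u) (iY : MetricSpace Y) (Z : Type u) (iZ : MetricSpace Z),
      (∃ y₁ y₂ : Y, y₁ ≠ y₂) ∧ (∃ z₁ z₂ : Z, z₁ ≠ z₂) ∧
      @IsMetricProductOf X Y Z _ iY iZ

/-! ## Flats, rank, symmetric spaces -/

/-- Euclidean `r`-space. -/
abbrev Eucl (r : ℕ) : Type := EuclideanSpace ℝ (Fin r)

/-- The real inner product on `Eucl r`. -/
def rinner {r : ℕ} (p q : Eucl r) : ℝ := @inner ℝ _ _ p q

/-- `X` has rank `r`: it contains an `r`-flat but no `(r+1)`-flat. -/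
def HasRank (X : Type u) [MetricSpace X] (r : ℕ) : Prop :=
  (∃ f : Eucl r → X, Isometry f) ∧ ¬ (∃ f : Eucl (r+1) → X, Isometry f)

/-- A Riemannian symmetric space of noncompact type, characterized metrically:
a locally compact, geodesically complete Hadamard space possessing a geodesic
point reflection at every point, homogeneous, and without Euclidean de Rham
factor. -/
structure IsSymmetricSpaceNCT (X : Type u) [MetricSpace X] : Prop where
  hadamard : HadamardSpace X
  locallyCompact : LocallyCompactSpace X
  geodComplete : GeodesicallyComplete X
  pointSymmetry : ∀ x : X, ∃ σ : X ≃ᵢ X, σ x = x ∧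
    ∀ c : ℝ → X, IsGeodesicLine c → c 0 = x → ∀ t : ℝ, σ (c t) = c (-t)
  homogeneous : ∀ x y : X, ∃ g : X ≃ᵢ X, g x = y
  noEuclideanFactor : ¬ HasEuclideanDeRhamFactor X

/-! ## Spherical buildings -/

/-- The unit sphere of `Eucl r`. -/
def unitSphere (r : ℕ) : Set (Eucl r) := Metric.sphere (0 : Eucl r) 1

/-- The round (angular) metric on the unit sphere. -/
def sphDist {r : ℕ} (p q : Eucl r) : ℝ := Real.arccos (rinner p q)

/-- The reflection of `Eucl r` in the hyperplane orthogonal to `v`. -/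
def reflMap {r : ℕ} (v : Eucl r) (x : Eucl r) : Eucl r :=
  x - ((2 * rinner v x / rinner v v) • v)

/-- A structure of a spherical building of dimension `r - 1` on a set `B`
with "distance function" `d` (for us: the ideal boundary with the Tits
metric), modelled on the spherical Coxeter complex of a finite reflection
group `W` acting on the unit sphere of `Eucl r`.  Charts are isometric
embeddings of the round unit sphere (their images are the apartments), any
two points lie in a common apartment, and coordinate changes are induced by
elements of `W`.  The distance `d` is a metric satisfying the CAT(1)
comparison (CN) inequality. -/
structure SphericalBuildingStructure (B : Type v) (d : B → B → ℝ) (r : ℕ) where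
  W : Subgroup (Eucl r ≃ₗᵢ[ℝ] Eucl r)
  W_finite : (W : Set (Eucl r ≃ₗᵢ[ℝ] Eucl r)).Finite
  W_reflections : Subgroup.closure
    {g : Eucl r ≃ₗᵢ[ℝ] Eucl r | g ∈ W ∧ ∃ v : Eucl r, v ≠ 0 ∧ ∀ x, g x = reflMap v x} = W
  charts : Set (Eucl r → B)
  charts_nonempty : charts.Nonempty
  charts_isometric : ∀ ι ∈ charts, ∀ p ∈ unitSphere r, ∀ q ∈ unitSphere r,
    d (ι p) (ι q) = sphDist p q
  charts_cover : ∀ x y : B, ∃ ι ∈ charts,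
    x ∈ ι '' unitSphere r ∧ y ∈ ι '' unitSphere r
  charts_compatible : ∀ ι₁ ∈ charts, ∀ ι₂ ∈ charts,
    ∃ w : Eucl r ≃ₗᵢ[ℝ] Eucl r, w ∈ W ∧
      ∀ p ∈ unitSphere r, ι₂ p ∈ ι₁ '' unitSphere r → ι₂ p = ι₁ (w p)
  d_self : ∀ x : B, d x x = 0
  d_comm : ∀ x y : B, d x y = d y x
  d_triangle : ∀ x y z : B, d x z ≤ d x y + d y z
  cat1 : ∀ x y z m : B, d x y + d x z + d y z < 2 * Real.pi → d y z < Real.pi →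
    d y m = d y z / 2 → d m z = d y z / 2 →
    (Real.cos (d x y) + Real.cos (d x z)) / 2 ≤ Real.cos (d x m) * Real.cos (d y z / 2)

namespace SphericalBuildingStructure

variable {B : Type v} {d : B → B → ℝ} {r : ℕ}

/-- `v` is a root: the reflection in the hyperplane `v^⊥` belongs to `W`. -/
def IsRoot (S : SphericalBuildingStructure B d r) (v : Eucl r) : Prop :=
  v ≠ 0 ∧ ∃ g ∈ S.W, ∀ x, g x = reflMap v x

/-- Thickness: every wall of every apartment bounds a half-apartment which
meets that apartment only in the wall (so every wall bounds at least three
half-apartments; equivalently, every panel is adjacent to at least three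
chambers). -/
def Thick (S : SphericalBuildingStructure B d r) : Prop :=
  ∀ ι ∈ S.charts, ∀ v : Eucl r, S.IsRoot v → ∃ ι' ∈ S.charts,
    (∀ p ∈ unitSphere r, rinner v p ≤ 0 → ι' p = ι p) ∧
    (∀ p ∈ unitSphere r, 0 < rinner v p → ι' p ∉ ι '' unitSphere r)

/-- Irreducibility: the reflection representation of the Weyl group is
irreducible. -/
def Irreducible (S : SphericalBuildingStructure B d r) : Prop :=
  ∀ V : Submodule ℝ (Eucl r), (∀ g ∈ S.W, ∀ x ∈ V, g x ∈ V) → V = ⊥ ∨ V = ⊤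

end SphericalBuildingStructure

/-- The Tits boundary of `X` is a thick spherical building (modelled on a
Coxeter complex of rank `r`). -/
def TitsBoundaryThickBuilding (X : Type u) [MetricSpace X] (r : ℕ) : Prop :=
  ∃ S : SphericalBuildingStructure (IdealBoundary X) (titsDist X) r, S.Thick

/-- The Tits boundary of `X` is a thick irreducible spherical building. -/
def TitsBoundaryThickIrreducibleBuilding (X : Type u) [MetricSpace X] (r : ℕ) : Prop :=
  ∃ S : SphericalBuildingStructure (IdealBoundary X) (titsDist X) r,
    S.Thick ∧ S.Irreducible

/-! ## Euclidean buildings -/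

/-- A Euclidean building structure of rank `r` on a Hadamard space `X`:
an atlas of isometric embeddings of `Eucl r` (apartments) with coordinate
changes in an affine Weyl group `W_aff` (whose rotational part `Wlin` is a
finite reflection group), such that every geodesic segment, ray and complete
geodesic lies in an apartment, segments have well-defined directions in the
model Weyl chamber (the quotient of `Eucl r` by `Wlin`), and the angle
rigidity property holds. -/
structure EuclideanBuildingStructure (X : Type u) [MetricSpace X] (r : ℕ) where
  hadamard : HadamardSpace X
  Wlin : Subgroup (Eucl r ≃ₗᵢ[ℝ] Eucl r)
  Wlin_finite : (Wlin : Set (Eucl r ≃ₗᵢ[ℝ] Eucl r)).Finite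
  Wlin_reflections : Subgroup.closure
    {g : Eucl r ≃ₗᵢ[ℝ] Eucl r | g ∈ Wlin ∧ ∃ v : Eucl r, v ≠ 0 ∧ ∀ x, g x = reflMap v x} = Wlin
  Waff : Set (Eucl r → Eucl r)
  Waff_id : id ∈ Waff
  Waff_comp : ∀ g ∈ Waff, ∀ h ∈ Waff, g ∘ h ∈ Waff
  Waff_inv : ∀ g ∈ Waff, ∃ h ∈ Waff, g ∘ h = id ∧ h ∘ g = id
  Waff_rotational_part : ∀ g ∈ Waff, ∃ w ∈ Wlin, ∃ v : Eucl r, ∀ x, g x = w x + v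
  Waff_rotations_onto : ∀ w ∈ Wlin, ∃ g ∈ Waff, ∃ v : Eucl r, ∀ x, g x = w x + v
  charts : Set (Eucl r → X)
  charts_nonempty : charts.Nonempty
  charts_isometric : ∀ ι ∈ charts, Isometry ι
  charts_compatible : ∀ ι₁ ∈ charts, ∀ ι₂ ∈ charts, ∃ g ∈ Waff,
    ∀ p : Eucl r, ι₂ p ∈ Set.range ι₁ → ι₂ p = ι₁ (g p)
  segments_in_apartments : ∀ (γ : ℝ → X) (a b : ℝ), IsGeodesicSegment γ a b →
    ∃ ι ∈ charts, ∀ t ∈ Set.Icc a b, γ t ∈ Set.range ι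
  rays_in_apartments : ∀ ρ : ℝ → X, IsGeodesicRay ρ →
    ∃ ι ∈ charts, ∀ t : ℝ, 0 ≤ t → ρ t ∈ Set.range ι
  lines_in_apartments : ∀ c : ℝ → X, IsGeodesicLine c →
    ∃ ι ∈ charts, ∀ t : ℝ, c t ∈ Set.range ι
  direction : {p : X × X // p.1 ≠ p.2} →
    Quot (fun p q : Eucl r => ∃ w ∈ Wlin, w p = q)
  direction_charts : ∀ ι ∈ charts, ∀ p q : Eucl r, ∀ h : ι p ≠ ι q,
    direction ⟨(ι p, ι q), h⟩ = Quot.mk _ (‖q - p‖⁻¹ • (q - p))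
  angle_rigidity : ∃ A : (Quot (fun p q : Eucl r => ∃ w ∈ Wlin, w p = q)) ×
      (Quot (fun p q : Eucl r => ∃ w ∈ Wlin, w p = q)) → Set ℝ,
    (∀ c, (A c).Finite) ∧ ∀ x y z : X, ∀ hy : x ≠ y, ∀ hz : x ≠ z,
      alexAngle x y z ∈ A (direction ⟨(x, y), hy⟩, direction ⟨(x, z), hz⟩)

/-! ## Isometry groups, topology -/

instance isomEquivTopology (X : Type u) [MetricSpace X] : TopologicalSpace (X ≃ᵢ X) :=
  TopologicalSpace.induced
    (fun g => ((⟨g, g.continuous⟩ : C(X, X)), (⟨(g.symm : X → X), g.symm.continuous⟩ : C(X, X))))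
    inferInstance

/-- Helper: the topology coming from an explicitly given metric. -/
abbrev mtop {α : Type u} (i : MetricSpace α) : TopologicalSpace α :=
  i.toPseudoMetricSpace.toUniformSpace.toTopologicalSpace

abbrev pems (α : Type u) (i : MetricSpace α) : PseudoEMetricSpace α :=
  @PseudoMetricSpace.toPseudoEMetricSpace α i.toPseudoMetricSpace

/-- Helper: the type of self-isometries for an explicitly given metric. -/
abbrev IsomT (α : Type u) (i : MetricSpace α) : Type u :=
  @IsometryEquiv α α (pems α i) (pems α i)

abbrev isomOne (α : Type u) (i : MetricSpace α) : IsomT α i :=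
  @IsometryEquiv.refl α (pems α i)

/-- Helper: the identity component of the full isometry group, for an
explicitly given metric. -/
abbrev isomIdentityComponent (α : Type u) (i : MetricSpace α) : Set (IsomT α i) :=
  @connectedComponent (IsomT α i) (@isomEquivTopology α i) (isomOne α i)

abbrev bdryMapOf (α : Type u) (i : MetricSpace α) (g : IsomT α i) :
    (@IdealBoundary α i) → (@IdealBoundary α i) := @bdryMap α α i i g

/-! ## Minimality, parallel sets, central geodesics -/

/-- `Y` coincides with its convex core: `Y` has no proper nonempty closed
convex subset with full ideal boundary. -/
def IsMinimalHadamard (Y : Type u) [MetricSpace Y] : Prop :=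
  ∀ C : Set Y, C.Nonempty → IsClosed C → GeodConvex C →
    setBoundary C = Set.univ → C = Set.univ

/-- `T` is a minimal nonempty closed convex subset with full ideal boundary
(a convex core of `Y`). -/
def IsMinimalFullConvex {Y : Type u} [MetricSpace Y] (T : Set Y) : Prop :=
  T.Nonempty ∧ IsClosed T ∧ GeodConvex T ∧ setBoundary T = Set.univ ∧
    ∀ T' : Set Y, T'.Nonempty → IsClosed T' → GeodConvex T' → T' ⊆ T →
      setBoundary T' = Set.univ → T' = T

/-- Two complete geodesics are parallel (at bounded Hausdorff distance). -/
def ParallelLines {Y : Type u} [MetricSpace Y] (c₁ c₂ : ℝ → Y) : Prop :=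
  IsGeodesicLine c₁ ∧ IsGeodesicLine c₂ ∧
    EMetric.hausdorffEdist (Set.range c₁) (Set.range c₂) ≠ ⊤

/-- The circumradius of a complete geodesic within its parallel set. -/
def lineCircumradius {Y : Type u} [MetricSpace Y] (c : ℝ → Y) : ℝ :=
  ⨆ c' : {c' : ℝ → Y // ParallelLines c c'},
    Metric.hausdorffDist (Set.range c) (Set.range c'.1)

/-- A central geodesic: a complete geodesic which is the circumcenter of the
compact cross section of its parallel set, i.e. which minimizes the
circumradius among all geodesics parallel to it. -/
def IsCentralGeodesic {Y : Type u} [MetricSpace Y] (c : ℝ → Y) : Prop :=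
  IsGeodesicLine c ∧ ∀ c' : ℝ → Y, ParallelLines c c' →
    lineCircumradius c ≤ lineCircumradius c'

/-- The set of translational parts of elements of `H` translating along the
oriented geodesic `c` — the image of the homomorphism
`trans : Stab_H(c) → ℝ`. -/
def transShifts {Y : Type u} [MetricSpace Y] (H : Subgroup (Y ≃ᵢ Y)) (c : ℝ → Y) :
    Set ℝ :=
  {s : ℝ | ∃ g ∈ H, ∀ t : ℝ, g (c t) = c (t + s)}

/-- The parabolic stabilizer of each ideal boundary point within `H` acts
transitively on the complement of that point in the ideal boundary. -/
def ParabolicallyTransitive {Y : Type u} [MetricSpace Y] (H : Subgroup (Y ≃ᵢ Y)) : Prop :=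
  ∀ ξ η₁ η₂ : IdealBoundary Y, η₁ ≠ ξ → η₂ ≠ ξ →
    ∃ g : Y ≃ᵢ Y, InParabolicStabilizer (H : Set (Y ≃ᵢ Y)) g ξ ∧ bdryMap g η₁ = η₂

end CAT0Geo

namespace CAT0Geo

/-! ## Spheres and hemispheres in the Tits boundary -/

/-- `s ⊆ ∂∞Y` is a unit sphere of dimension `d` with respect to the Tits
metric. -/
def IsUnitSphereIn {Y : Type u} [MetricSpace Y] (s : Set (IdealBoundary Y)) (d : ℕ) : Prop :=
  ∃ F : Eucl (d+1) → IdealBoundary Y, Set.InjOn F (unitSphere (d+1)) ∧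
    (∀ p ∈ unitSphere (d+1), ∀ q ∈ unitSphere (d+1),
      titsDist Y (F p) (F q) = sphDist p q) ∧
    s = F '' unitSphere (d+1)

/-- The unit sphere `s ⊆ ∂∞Y` of dimension `d` bounds a unit hemisphere:
there is a subset of the Tits boundary isometric to a closed hemisphere of the
round unit `(d+1)`-sphere whose boundary sphere is `s`. -/
def BoundsHemisphere {Y : Type u} [MetricSpace Y] (s : Set (IdealBoundary Y)) (d : ℕ) : Prop :=
  ∃ G : Eucl (d+2) → IdealBoundary Y,
    Set.InjOn G {p ∈ unitSphere (d+2) | 0 ≤ p 0} ∧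
    (∀ p ∈ {p ∈ unitSphere (d+2) | 0 ≤ p 0}, ∀ q ∈ {p ∈ unitSphere (d+2) | 0 ≤ p 0},
      titsDist Y (G p) (G q) = sphDist p q) ∧
    G '' {p ∈ unitSphere (d+2) | p 0 = 0} = s

/-! ## Convex subsets with prescribed boundary -/

/-- The family `C_A` of closed convex subsets `C ⊆ Y` with `∂∞C ⊇ A`. -/
def convexFamily {Y : Type u} [MetricSpace Y] (A : Set (IdealBoundary Y)) : Set (Set Y) :=
  {C : Set Y | IsClosed C ∧ GeodConvex C ∧ A ⊆ setBoundary C}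

/-- `C` is a minimal element of the family `C_A`. -/
def IsMinimalIn {Y : Type u} [MetricSpace Y] (A : Set (IdealBoundary Y)) (C : Set Y) : Prop :=
  C ∈ convexFamily A ∧ ∀ C' ∈ convexFamily A, C' ⊆ C → C' = C

/-! ## Walls, panels, parallel sets, cross sections -/

section Building

variable {B : Type v} {d : B → B → ℝ} {r : ℕ}

/-- A wall of the spherical building `B`: the image under a chart of the
intersection of the model sphere with the reflection hyperplane of a root;
a singular sphere of codimension 1. -/
def SphericalBuildingStructure.IsWall (S : SphericalBuildingStructure B d r)
    (s : Set B) : Prop :=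
  ∃ ι ∈ S.charts, ∃ v : Eucl r, S.IsRoot v ∧
    s = ι '' {p ∈ unitSphere r | rinner v p = 0}

/-- The closed face of the model Coxeter complex spanned by the point `p`. -/
def SphericalBuildingStructure.modelClosedFace (S : SphericalBuildingStructure B d r)
    (p : Eucl r) : Set (Eucl r) :=
  {q ∈ unitSphere r | ∀ v : Eucl r, S.IsRoot v →
    ((rinner v p = 0 → rinner v q = 0) ∧ (0 < rinner v p → 0 ≤ rinner v q) ∧
      (rinner v p < 0 → rinner v q ≤ 0))}

/-- A panel of the spherical building `B`: the image under a chart of a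
closed codimension-one face of the model Coxeter complex. -/
def SphericalBuildingStructure.IsPanel (S : SphericalBuildingStructure B d r)
    (τ : Set B) : Prop :=
  ∃ ι ∈ S.charts, ∃ p ∈ unitSphere r,
    Module.finrank ℝ (Submodule.span ℝ {v : Eucl r | S.IsRoot v ∧ rinner v p = 0}) = 1 ∧
    τ = ι '' S.modelClosedFace p

end Building

/-- The union `P(s)` of all `k`-flats in `X` with ideal boundary `s`. -/
def parallelSetOf {X : Type u} [MetricSpace X] (k : ℕ) (s : Set (IdealBoundary X)) :
    Set X :=
  {x : X | ∃ f : Eucl k → X, Isometry f ∧ setBoundary (Set.range f) = s ∧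
    x ∈ Set.range f}

/-- The cross section of the parallel set `P(s)` through the point `x`:
the set of points of `P(s)` lying on the same horospheres as `x` for all
centers in `s`. -/
def crossSectionAt {X : Type u} [MetricSpace X] (k : ℕ) (s : Set (IdealBoundary X))
    (x : X) : Set X :=
  {y ∈ parallelSetOf k s | ∀ ρ : Rays X, rayClass ρ ∈ s →
    busemann ρ.1 y = busemann ρ.1 x}

/-- `K` is a convex core of the cross section of the parallel set of the
singular sphere `s` (boundary of `k`-flats): a minimal nonempty closed convex
subset of a cross section of `P(s)` with the full ideal boundary of the cross
section. -/
def IsMinimalCoreOver {X : Type u} [MetricSpace X] (k : ℕ)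
    (s : Set (IdealBoundary X)) (K : Set X) : Prop :=
  ∃ x : X, x ∈ K ∧ K ⊆ crossSectionAt k s x ∧ IsClosed K ∧ GeodConvex K ∧
    setBoundary K = setBoundary (crossSectionAt k s x) ∧
    ∀ K' : Set X, K'.Nonempty → IsClosed K' → GeodConvex K' → K' ⊆ K →
      setBoundary K' = setBoundary (crossSectionAt k s x) → K' = K

/-! ## Strong asymptote classes -/

/-- The asymptotic ("nearest point") distance between two rays. -/
def asympDistRays {X : Type u} [MetricSpace X] (ρ₁ ρ₂ : ℝ → X) : ℝ :=
  ⨅ p : {p : ℝ × ℝ // 0 ≤ p.1 ∧ 0 ≤ p.2}, dist (ρ₁ p.1.1) (ρ₂ p.1.2)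

/-- The type of geodesic rays asymptotic to the ideal point `ξ`. -/
def raysTo {X : Type u} [MetricSpace X] (ξ : IdealBoundary X) : Type u :=
  {ρ : Rays X // rayClass ρ = ξ}

/-- The asymptotic distance between two points, measured through rays from
them to the ideal point `ξ` (the distance between the corresponding strong
asymptote classes). -/
def rayPointDist {X : Type u} [MetricSpace X] (ξ : IdealBoundary X) (y y' : X) : ℝ :=
  ⨅ p : {p : Rays X × Rays X // p.1.1 0 = y ∧ p.2.1 0 = y' ∧
      rayClass p.1 = ξ ∧ rayClass p.2 = ξ},
    asympDistRays p.1.1.1 p.1.2.1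

/-! ## Perspectivities and holonomy -/

/-- The perspectivity relation between two convex cores `K, K'` (of cross
sections of parallel sets of two singular spheres both containing the simplex
`τ`): `y` and `y'` correspond iff the rays from them to the points of `τ`
realize the minimal asymptotic distance between `K` and `K'` (the canonical
identification through the space of strong asymptote classes). -/
def perspRel {X : Type u} [MetricSpace X] (τ : Set (IdealBoundary X))
    (K K' : Set X) (y y' : X) : Prop :=
  y ∈ K ∧ y' ∈ K' ∧ ∀ ξ ∈ τ, ∀ z ∈ K, ∀ z' ∈ K',
    rayPointDist ξ y y' ≤ rayPointDist ξ z z'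

/-- Composites of perspectivities between convex cores along chains of walls
in which consecutive walls share a panel. -/
inductive PerspChain {X : Type u} [MetricSpace X] {r : ℕ}
    (S : SphericalBuildingStructure (IdealBoundary X) (titsDist X) r) :
    Set X → Set X → (X → X → Prop) → Prop
  | base (s : Set (IdealBoundary X)) (K : Set X) (hs : S.IsWall s)
      (hK : IsMinimalCoreOver (r-1) s K) :
      PerspChain S K K (fun y y' => y = y' ∧ y ∈ K)
  | step {K₀ K K' : Set X} {R : X → X → Prop} (h : PerspChain S K₀ K R)
      (τ s s' : Set (IdealBoundary X)) (hτ : S.IsPanel τ)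
      (hs : S.IsWall s) (hs' : S.IsWall s') (hτs : τ ⊆ s) (hτs' : τ ⊆ s')
      (hK : IsMinimalCoreOver (r-1) s K) (hK' : IsMinimalCoreOver (r-1) s' K') :
      PerspChain S K₀ K' (fun y y'' => ∃ y', R y y' ∧ perspRel τ K K' y' y'')

/-- The holonomy group `Hol(τ)` at the panel `τ`, realized on the convex core
`K₀` (of a cross section of the parallel set of a wall containing `τ`):
the closure, in the isometry group of `K₀`, of the set of isometries induced
by composites of perspectivities along closed chains. -/
def holonomySet {X : Type u} [MetricSpace X] {r : ℕ}
    (S : SphericalBuildingStructure (IdealBoundary X) (titsDist X) r)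
    (K₀ : Set X) : Set (↥K₀ ≃ᵢ ↥K₀) :=
  closure {g : ↥K₀ ≃ᵢ ↥K₀ | ∃ R : X → X → Prop, PerspChain S K₀ K₀ R ∧
    ∀ y y' : ↥K₀, (R y.1 y'.1 ↔ g y = y')}

/-! ## Links -/

/-- The link of a singular sphere `s` in the Tits boundary: the set of points
at Tits distance `≤ π/2` from all points of `s` (the centers of the unit
hemispheres with boundary `s`).  For a wall `s` containing a panel `τ` as a
top-dimensional simplex this realizes the space of directions `Σ_τ ∂TitsX`. -/
def linkSet (X : Type u) [MetricSpace X] (s : Set (IdealBoundary X)) :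
    Set (IdealBoundary X) :=
  {η : IdealBoundary X | ∀ ξ ∈ s, titsDist X ξ η ≤ Real.pi / 2}

/-! ## The group of boundary automorphisms -/

instance homeoGroup (B : Type v) [TopologicalSpace B] : Group (B ≃ₜ B) where
  mul f g := g.trans f
  one := Homeomorph.refl B
  inv := Homeomorph.symm
  mul_assoc f g h := Homeomorph.ext fun _ => rfl
  one_mul f := Homeomorph.ext fun _ => rfl
  mul_one f := Homeomorph.ext fun _ => rfl
  inv_mul_cancel f := Homeomorph.ext fun x => f.symm_apply_apply x

instance homeoTopology (B : Type v) [TopologicalSpace B] : TopologicalSpace (B ≃ₜ B) :=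
  TopologicalSpace.induced
    (fun g => ((⟨g, g.continuous⟩ : C(B, B)), (⟨(g.symm : B → B), g.symm.continuous⟩ : C(B, B))))
    inferInstance

/-- `Aut(∂∞X)`: the group of cone topology homeomorphisms of the ideal
boundary preserving the Tits metric, with the compact-open topology. -/
def boundaryAut (X : Type u) [MetricSpace X] :
    Subgroup (IdealBoundary X ≃ₜ IdealBoundary X) where
  carrier := {φ | ∀ ξ η : IdealBoundary X, titsDist X (φ ξ) (φ η) = titsDist X ξ η}
  one_mem' := by intro ξ η; rfl
  mul_mem' := by
    intro φ ψ hφ hψ ξ η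
    have h1 : ∀ ζ ζ' : IdealBoundary X, titsDist X (φ (ψ ζ)) (φ (ψ ζ')) = titsDist X ζ ζ' := by
      intro ζ ζ'
      rw [hφ (ψ ζ) (ψ ζ'), hψ ζ ζ']
    exact h1 ξ η
  inv_mem' := by
    intro φ hφ ξ η
    have := hφ (φ.symm ξ) (φ.symm η)
    simpa using this.symm

end CAT0Geo

namespace CAT0Geo

section Aux

open Filter Topology

/-- helper: `a ≤ b` from `a^2 ≤ b^2` for nonneg. -/
lemma le_of_sq_le_sq' {a b : ℝ} (ha : 0 ≤ a) (hb : 0 ≤ b) (h : a^2 ≤ b^2) : a ≤ b := by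
  nlinarith [sq_nonneg (a - b), sq_nonneg (a + b)]

/-- Dyadic points belong to any midpoint-closed set containing 0 and 1. -/
lemma dyadic_mem {S : Set ℝ} (h0 : (0:ℝ) ∈ S) (h1 : (1:ℝ) ∈ S)
    (hmid : ∀ u ∈ S, ∀ v ∈ S, (u+v)/2 ∈ S) :
    ∀ n k : ℕ, k ≤ 2^n → ((k : ℝ)/2^n) ∈ S := by
  intro n
  induction n with
  | zero =>
    intro k hk
    interval_cases k
    · simpa using h0
    · simpa using h1
  | succ n ih =>
    have h2n : (2:ℕ)^(n+1) = 2 * 2^n := by ring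
    intro k hk
    rcases Nat.even_or_odd k with ⟨j, hj⟩ | ⟨j, hj⟩
    · subst hj
      have hj2 : j ≤ 2^n := by omega
      have heq : ((j + j : ℕ):ℝ)/2^(n+1) = (j:ℝ)/2^n := by
        push_cast; ring
      rw [heq]
      exact ih j hj2
    · subst hj
      have hj' : j + 1 ≤ 2^n := by omega
      have ha := ih j (by omega)
      have hb := ih (j+1) hj'
      have := hmid _ ha _ hb
      have heq : ((2*j+1 : ℕ):ℝ)/2^(n+1) = ((j:ℝ)/2^n + ((j+1:ℕ):ℝ)/2^n)/2 := by
        push_cast; ring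
      rw [heq]
      exact this

/-- Midpoint-convex continuous functions satisfy the chord inequality. -/
lemma midpt_convex_chord {f : ℝ → ℝ} {a b : ℝ} (hab : a ≤ b)
    (hc : ContinuousOn f (Set.Icc a b))
    (hm : ∀ u ∈ Set.Icc a b, ∀ v ∈ Set.Icc a b, f ((u+v)/2) ≤ (f u + f v)/2) :
    ∀ l ∈ Set.Icc (0:ℝ) 1, f ((1-l)*a + l*b) ≤ (1-l)*f a + l*f b := by
  set S : Set ℝ := {l | l ∈ Set.Icc (0:ℝ) 1 ∧ f ((1-l)*a + l*b) ≤ (1-l)*f a + l*f b} with hS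
  have haff : ∀ l ∈ Set.Icc (0:ℝ) 1, ((1-l)*a + l*b) ∈ Set.Icc a b := by
    rintro l ⟨hl0, hl1⟩
    constructor <;> nlinarith
  have hmidS : ∀ u ∈ S, ∀ v ∈ S, (u+v)/2 ∈ S := by
    rintro u ⟨hu1, hu2⟩ v ⟨hv1, hv2⟩
    refine ⟨⟨by cases hu1; cases hv1; linarith, by cases hu1; cases hv1; linarith⟩, ?_⟩
    have key := hm _ (haff u hu1) _ (haff v hv1)
    have harg : (((1-u)*a + u*b) + ((1-v)*a + v*b))/2 = (1-(u+v)/2)*a + ((u+v)/2)*b := by ring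
    rw [harg] at key
    calc f ((1-(u+v)/2)*a + ((u+v)/2)*b) ≤ (f ((1-u)*a + u*b) + f ((1-v)*a + v*b))/2 := key
    _ ≤ (((1-u)*f a + u*f b) + ((1-v)*f a + v*f b))/2 := by linarith
    _ = (1-(u+v)/2)*f a + ((u+v)/2)*f b := by ring
  have h0S : (0:ℝ) ∈ S := by
    refine ⟨⟨le_refl _, zero_le_one⟩, ?_⟩
    simp
  have h1S : (1:ℝ) ∈ S := by
    refine ⟨⟨zero_le_one, le_refl _⟩, ?_⟩
    simp
  have hdy := dyadic_mem h0S h1S hmidS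
  -- now approximate any l by dyadics
  rintro l hl
  obtain ⟨hl0, hl1⟩ := hl
  -- sequence of dyadics
  set u : ℕ → ℝ := fun n => (⌊l * 2^n⌋₊ : ℝ)/2^n with hu
  have hun : ∀ n, u n ∈ S := by
    intro n
    apply hdy
    have : l * 2^n ≤ 2^n := by
      nlinarith [pow_pos (by norm_num : (0:ℝ) < 2) n]
    calc ⌊l * 2^n⌋₊ ≤ ⌊(2:ℝ)^n⌋₊ := Nat.floor_le_floor this
    _ = 2^n := by
        rw [show ((2:ℝ)^n) = ((2^n : ℕ) : ℝ) by push_cast; ring]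
        exact Nat.floor_natCast _
  have hub : ∀ n, |u n - l| ≤ 1/2^n := by
    intro n
    have hp : (0:ℝ) < 2^n := pow_pos (by norm_num) n
    have h1' : (⌊l * 2^n⌋₊ : ℝ) ≤ l * 2^n := Nat.floor_le (by positivity)
    have h2' : l * 2^n < ⌊l * 2^n⌋₊ + 1 := Nat.lt_floor_add_one _
    have he : u n - l = ((⌊l * 2^n⌋₊ : ℝ) - l * 2^n)/2^n := by
      rw [hu]; field_simp
    rw [abs_le, he]
    constructor
    · have : (-1 : ℝ)/2^n ≤ ((⌊l * 2^n⌋₊ : ℝ) - l * 2^n)/2^n :=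
        (div_le_div_iff_of_pos_right hp).2 (by linarith)
      calc -(1/2^n) = (-1 : ℝ)/2^n := by ring
      _ ≤ _ := this
    · exact (div_le_div_iff_of_pos_right hp).2 (by linarith)
  have hul : Tendsto u atTop (𝓝 l) := by
    rw [tendsto_iff_dist_tendsto_zero]
    have h2 : Tendsto (fun n : ℕ => (1:ℝ)/2^n) atTop (𝓝 0) := by
      simpa [div_pow] using tendsto_pow_atTop_nhds_zero_of_lt_one
        (by norm_num : (0:ℝ) ≤ 1/2) (by norm_num : (1:ℝ)/2 < 1)
    refine squeeze_zero (fun n => dist_nonneg) (fun n => ?_) h2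
    rw [Real.dist_eq]
    exact hub n
  -- continuity
  have hF : ContinuousOn (fun l : ℝ => f ((1-l)*a + l*b)) (Set.Icc 0 1) := by
    apply hc.comp
    · exact ((continuous_const.sub continuous_id).mul continuous_const
        |>.add (continuous_id.mul continuous_const)).continuousOn
    · intro l hl; exact haff l hl
  have hten : Tendsto (fun n => f ((1 - u n)*a + u n * b)) atTop (𝓝 (f ((1-l)*a + l*b))) := by
    have hmem : ∀ n, u n ∈ Set.Icc (0:ℝ) 1 := fun n => (hun n).1
    have : Tendsto u atTop (𝓝[Set.Icc (0:ℝ) 1] l) := by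
      rw [tendsto_nhdsWithin_iff]
      exact ⟨hul, Filter.Eventually.of_forall hmem⟩
    exact ((hF l ⟨hl0, hl1⟩).tendsto).comp this
  have hten2 : Tendsto (fun n => (1 - u n)*f a + u n * f b) atTop
      (𝓝 ((1-l)*f a + l*f b)) := by
    apply Tendsto.add
    · exact (Tendsto.sub tendsto_const_nhds hul).mul tendsto_const_nhds
    · exact hul.mul tendsto_const_nhds
  exact le_of_tendsto_of_tendsto hten hten2 (Filter.Eventually.of_forall fun n => (hun n).2)

/-- A continuous midpoint-convex function on `[0,∞)` which is bounded above is
nonincreasing. -/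
lemma mcvx_bounded_antitone {f : ℝ → ℝ} {M : ℝ}
    (hc : ContinuousOn f (Set.Ici 0))
    (hm : ∀ u ∈ Set.Ici (0:ℝ), ∀ v ∈ Set.Ici (0:ℝ), f ((u+v)/2) ≤ (f u + f v)/2)
    (hb : ∀ t ∈ Set.Ici (0:ℝ), f t ≤ M) :
    ∀ s ∈ Set.Ici (0:ℝ), ∀ t, s ≤ t → f t ≤ f s := by
  rintro s hs t hst
  by_contra hlt
  push_neg at hlt
  have hd : 0 < f t - f s := by linarith
  have hst' : s < t := by
    rcases eq_or_lt_of_le hst with rfl | h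
    · linarith
    · exact h
  have hMs : f t - f s ≤ M - f s := by
    have := hb t (le_trans hs hst); linarith
  set l : ℝ := (f t - f s)/(M - f s + 1) with hl
  have hl0 : 0 < l := div_pos hd (by linarith)
  have hl1 : l < 1 := by
    rw [hl, div_lt_one (by linarith)]; linarith
  set U : ℝ := s + (t - s)/l with hU
  have hsU : s < U := by
    rw [hU]
    have : 0 < (t - s)/l := div_pos (by linarith) hl0
    linarith
  have harg : (1-l)*s + l*U = t := by
    rw [hU]
    field_simp
    ring
  have hchord := midpt_convex_chord (le_of_lt hsU)
    (hc.mono (Set.Icc_subset_Ici_iff (le_of_lt hsU) |>.2 hs))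
    (fun u hu v hv => hm u (le_trans hs hu.1) v (le_trans hs hv.1))
    l ⟨le_of_lt hl0, le_of_lt hl1⟩
  rw [harg] at hchord
  have hfU := hb U (le_trans hs (le_of_lt hsU))
  have hlM : l * (M - f s + 1) = f t - f s := by
    rw [hl]
    exact div_mul_cancel₀ _ (by linarith)
  nlinarith

end Aux

end CAT0Geo

namespace CAT0Geo

open Filter Topology

section MetricCAT0

variable {X : Type u} [MetricSpace X]

/-- `m` is a metric midpoint of `y` and `z`. -/
def IsMidpt (m y z : X) : Prop := dist y m = dist y z / 2 ∧ dist m z = dist y z / 2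

lemma IsMidpt.symm {m y z : X} (h : IsMidpt m y z) : IsMidpt m z y := by
  obtain ⟨h1, h2⟩ := h
  refine ⟨?_, ?_⟩
  · rw [dist_comm z m, dist_comm z y, h2]
  · rw [dist_comm m y, dist_comm z y, h1]

lemma exists_midpt (hG : GeodesicSpace X) (y z : X) : ∃ m, IsMidpt m y z := by
  obtain ⟨γ, hγ, h0, h1⟩ := hG y z
  have hd : 0 ≤ dist y z := dist_nonneg
  have m0 : (0:ℝ) ∈ Set.Icc 0 (dist y z) := ⟨le_refl _, hd⟩
  have m2 : dist y z / 2 ∈ Set.Icc 0 (dist y z) := ⟨by linarith, by linarith⟩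
  have m1 : dist y z ∈ Set.Icc 0 (dist y z) := ⟨hd, le_refl _⟩
  refine ⟨γ (dist y z / 2), ?_, ?_⟩
  · have := hγ m0 m2
    rw [h0] at this
    rw [this]
    rw [abs_of_nonpos (by linarith)]
    ring
  · have := hγ m2 m1
    rw [h1] at this
    rw [this]
    rw [abs_of_nonpos (by linarith)]
    ring

/-- Two midpoints over a common endpoint (CN-inequality applied twice). -/
lemma midpt_common (hC : CAT0 X) {p q q' m m' : X}
    (hm : IsMidpt m p q) (hm' : IsMidpt m' p q') :
    dist m m' ≤ dist q q' / 2 := by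
  obtain ⟨ha1, ha2⟩ := hm
  obtain ⟨hb1, hb2⟩ := hm'
  have h1 : dist q' m ^2 ≤ (dist q' p^2 + dist q' q^2)/2 - dist p q^2/4 :=
    hC q' p q m ha1 ha2
  have h2 : dist m m' ^2 ≤ (dist m p^2 + dist m q'^2)/2 - dist p q'^2/4 :=
    hC m p q' m' hb1 hb2
  have hmp : dist m p = dist p q / 2 := by rw [dist_comm, ha1]
  have hmq' : dist m q' = dist q' m := dist_comm _ _
  rw [hmp, hmq'] at h2
  have hsq : dist m m' ^2 ≤ (dist q q' / 2)^2 := by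
    have hqq : dist q' q = dist q q' := dist_comm _ _
    have hpq' : dist q' p = dist p q' := dist_comm _ _
    rw [hqq, hpq'] at h1
    nlinarith [h1, h2]
  exact le_of_sq_le_sq' dist_nonneg (by positivity) hsq

/-- Metric midpoint convexity of the distance in a CAT(0) geodesic space. -/
lemma dist_mid_le (hC : CAT0 X) (hG : GeodesicSpace X) {m₁ y₁ z₁ m₂ y₂ z₂ : X}
    (h₁ : IsMidpt m₁ y₁ z₁) (h₂ : IsMidpt m₂ y₂ z₂) :
    dist m₁ m₂ ≤ (dist y₁ y₂ + dist z₁ z₂)/2 := by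
  obtain ⟨m₃, hm₃⟩ := exists_midpt hG y₁ z₂
  have e1 : dist m₁ m₃ ≤ dist z₁ z₂ / 2 := midpt_common hC h₁ hm₃
  have e2 : dist m₃ m₂ ≤ dist y₁ y₂ / 2 := midpt_common hC hm₃.symm h₂.symm
  have := dist_triangle m₁ m₃ m₂
  linarith

/-- Geodesic parameters' midpoints are metric midpoints. -/
lemma geo_midpt {γ : ℝ → X} {s : Set ℝ} (hγ : IsGeodesicOn γ s) {u v : ℝ}
    (hu : u ∈ s) (hv : v ∈ s) (hm : (u+v)/2 ∈ s) :
    IsMidpt (γ ((u+v)/2)) (γ u) (γ v) := by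
  constructor
  · rw [hγ hu hm, hγ hu hv]
    have h : u - (u+v)/2 = (u-v)/2 := by ring
    rw [h, abs_div, abs_two]
  · rw [hγ hm hv, hγ hu hv]
    have h : (u+v)/2 - v = (u-v)/2 := by ring
    rw [h, abs_div, abs_two]

/-- Continuity of distances along Lipschitz-type curves. -/
lemma continuousOn_dist_lip {f g : ℝ → X} {s : Set ℝ} {L : ℝ} (hL : 0 ≤ L)
    (hf : ∀ u ∈ s, ∀ v ∈ s, dist (f u) (f v) ≤ L * |u - v|)
    (hg : ∀ u ∈ s, ∀ v ∈ s, dist (g u) (g v) ≤ L * |u - v|) :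
    ContinuousOn (fun u => dist (f u) (g u)) s := by
  intro t ht
  rw [Metric.continuousWithinAt_iff]
  intro ε hε
  refine ⟨ε/(2*L+1), by positivity, ?_⟩
  intro y hy hd
  rw [Real.dist_eq]
  have h1 : |dist (f y) (g y) - dist (f t) (g t)| ≤ dist (f y) (f t) + dist (g y) (g t) := by
    rw [abs_sub_le_iff]
    constructor
    · have h4 := dist_triangle4 (f y) (f t) (g t) (g y)
      have h5 := dist_comm (g t) (g y)
      linarith
    · have h4 := dist_triangle4 (f t) (f y) (g y) (g t)
      have h5 := dist_comm (g y) (g t)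
      have h6 := dist_comm (f t) (f y)
      linarith
  have h2 := hf y hy t ht
  have h3 := hg y hy t ht
  have h4 : |y - t| < ε/(2*L+1) := by rwa [Real.dist_eq] at hd
  have h5 : L * |y - t| ≤ L * (ε/(2*L+1)) := by
    apply mul_le_mul_of_nonneg_left (le_of_lt h4) hL
  calc |dist (f y) (g y) - dist (f t) (g t)| ≤ dist (f y) (f t) + dist (g y) (g t) := h1
  _ ≤ 2 * (L * (ε/(2*L+1))) := by linarith
  _ < ε := by
      have h2L : (0:ℝ) < 2*L+1 := by positivity
      have hc : ε/(2*L+1)*(2*L+1) = ε := div_mul_cancel₀ _ (ne_of_gt h2L)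
      nlinarith [div_pos hε h2L]

/-- The CAT(0) convexity inequality for the squared distance along a geodesic. -/
lemma star (hC : CAT0 X) {γ : ℝ → X} {a b : ℝ} (hab : a < b)
    (hγ : IsGeodesicOn γ (Set.Icc a b)) (x : X) {t : ℝ} (ht : t ∈ Set.Icc a b) :
    dist x (γ t)^2 ≤ ((b-t)*dist x (γ a)^2 + (t-a)*dist x (γ b)^2)/(b-a) - (t-a)*(b-t) := by
  set G : ℝ → ℝ := fun s => dist x (γ s)^2 + (s-a)*(b-s) with hG
  have hmidG : ∀ u ∈ Set.Icc a b, ∀ v ∈ Set.Icc a b, G ((u+v)/2) ≤ (G u + G v)/2 := by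
    intro u hu v hv
    have hmid : (u+v)/2 ∈ Set.Icc a b := by
      obtain ⟨hu1, hu2⟩ := hu; obtain ⟨hv1, hv2⟩ := hv
      constructor <;> [linarith; linarith]
    have hM := geo_midpt hγ hu hv hmid
    have hcn := hC x (γ u) (γ v) (γ ((u+v)/2)) hM.1 hM.2
    have hduv : dist (γ u) (γ v) = |u - v| := hγ hu hv
    rw [hduv] at hcn
    have habs : |u-v|^2 = (u-v)^2 := sq_abs _
    rw [habs] at hcn
    rw [hG]
    simp only
    nlinarith [hcn]
  have hcont : ContinuousOn G (Set.Icc a b) := by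
    apply ContinuousOn.add
    · have h1 : ContinuousOn (fun s => dist ((fun _ : ℝ => x) s) (γ s)) (Set.Icc a b) := by
        apply continuousOn_dist_lip (le_refl (0:ℝ) |> fun _ => zero_le_one)
        · intro u hu v hv; simp
        · intro u hu v hv
          rw [hγ hu hv]
          simp [abs_nonneg]
      exact (h1.pow 2)
    · exact (Continuous.mul (by continuity) (by continuity)).continuousOn
  have hchord := midpt_convex_chord (le_of_lt hab) hcont hmidG
  set l : ℝ := (t-a)/(b-a) with hl
  have hba : (0:ℝ) < b - a := by linarith
  have hlmem : l ∈ Set.Icc (0:ℝ) 1 := by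
    constructor
    · exact div_nonneg (by linarith [ht.1]) (le_of_lt hba)
    · rw [div_le_one hba]; linarith [ht.2]
  have harg : (1-l)*a + l*b = t := by
    rw [hl]; field_simp; ring
  have := hchord l hlmem
  rw [harg] at this
  have hGa : G a = dist x (γ a)^2 := by rw [hG]; simp
  have hGb : G b = dist x (γ b)^2 := by rw [hG]; simp
  have hGt : G t = dist x (γ t)^2 + (t-a)*(b-t) := rfl
  rw [hGa, hGb, hGt] at this
  have h1l : 1 - l = (b-t)/(b-a) := by rw [hl]; field_simp; ring
  rw [h1l, hl] at this
  have : dist x (γ t)^2 ≤ (b-t)/(b-a)*dist x (γ a)^2 + (t-a)/(b-a)*dist x (γ b)^2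
      - (t-a)*(b-t) := by linarith
  calc dist x (γ t)^2 ≤ (b-t)/(b-a)*dist x (γ a)^2 + (t-a)/(b-a)*dist x (γ b)^2
      - (t-a)*(b-t) := this
  _ = ((b-t)*dist x (γ a)^2 + (t-a)*dist x (γ b)^2)/(b-a) - (t-a)*(b-t) := by
      field_simp

end MetricCAT0

end CAT0Geo

namespace CAT0Geo

open Filter Topology

section Rays0

variable {X : Type u} [MetricSpace X]

lemma mem_Ici0 {t : ℝ} (h : 0 ≤ t) : t ∈ Set.Ici (0:ℝ) := h

/-- Shifting a ray gives a ray. -/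
lemma ray_shift {ρ : ℝ → X} (hρ : IsGeodesicRay ρ) {t₀ : ℝ} (h : 0 ≤ t₀) :
    IsGeodesicRay (fun s => ρ (t₀ + s)) := by
  intro u hu v hv
  have hu' : (0:ℝ) ≤ t₀ + u := by simp only [Set.mem_Ici] at hu; linarith
  have hv' : (0:ℝ) ≤ t₀ + v := by simp only [Set.mem_Ici] at hv; linarith
  rw [hρ (mem_Ici0 hu') (mem_Ici0 hv')]
  congr 1
  ring

/-- The distance along matched parametrizations of two rays at bounded distance
is nonincreasing. -/
lemma ray_diag_antitone (hC : CAT0 X) (hG : GeodesicSpace X) {ρ τ : ℝ → X}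
    (hρ : IsGeodesicRay ρ) (hτ : IsGeodesicRay τ) {t₁ t₂ C : ℝ}
    (h₁ : 0 ≤ t₁) (h₂ : 0 ≤ t₂)
    (hB : ∀ u, 0 ≤ u → dist (ρ (t₁+u)) (τ (t₂+u)) ≤ C) :
    ∀ u, 0 ≤ u → ∀ v, u ≤ v →
      dist (ρ (t₁+v)) (τ (t₂+v)) ≤ dist (ρ (t₁+u)) (τ (t₂+u)) := by
  have key := mcvx_bounded_antitone (f := fun u => dist (ρ (t₁+u)) (τ (t₂+u))) (M := C)
    ?_ ?_ ?_
  · intro u hu v huv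
    exact key u hu v huv
  · -- continuity
    apply continuousOn_dist_lip (L := 1) zero_le_one
    · intro u hu v hv
      simp only [Set.mem_Ici] at hu hv
      rw [hρ (mem_Ici0 (by linarith)) (mem_Ici0 (by linarith))]
      have : t₁ + u - (t₁ + v) = u - v := by ring
      rw [this]
      simp
    · intro u hu v hv
      simp only [Set.mem_Ici] at hu hv
      rw [hτ (mem_Ici0 (by linarith)) (mem_Ici0 (by linarith))]
      have : t₂ + u - (t₂ + v) = u - v := by ring
      rw [this]
      simp
  · -- midpoint convexity
    intro u hu v hv
    simp only [Set.mem_Ici] at hu hv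
    have e1 : t₁ + (u+v)/2 = ((t₁+u) + (t₁+v))/2 := by ring
    have e2 : t₂ + (u+v)/2 = ((t₂+u) + (t₂+v))/2 := by ring
    rw [e1, e2]
    have m1 := geo_midpt hρ (mem_Ici0 (by linarith : (0:ℝ) ≤ t₁+u))
      (mem_Ici0 (by linarith : (0:ℝ) ≤ t₁+v)) (mem_Ici0 (by linarith))
    have m2 := geo_midpt hτ (mem_Ici0 (by linarith : (0:ℝ) ≤ t₂+u))
      (mem_Ici0 (by linarith : (0:ℝ) ≤ t₂+v)) (mem_Ici0 (by linarith))
    exact dist_mid_le hC hG m1 m2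
  · intro t ht
    exact hB t ht

/-- Uniqueness of asymptotic rays from a point. -/
lemma ray_unique (hC : CAT0 X) (hG : GeodesicSpace X) {ρ ρ' : ℝ → X}
    (hρ : IsGeodesicRay ρ) (hρ' : IsGeodesicRay ρ') (h0 : ρ 0 = ρ' 0)
    {C : ℝ} (hB : ∀ t, 0 ≤ t → dist (ρ t) (ρ' t) ≤ C) :
    ∀ t, 0 ≤ t → ρ t = ρ' t := by
  have key : ∀ n : ℕ, ∀ t, 0 ≤ t → dist (ρ t) (ρ' t) ≤ C / 2^n := by
    intro n
    induction n with
    | zero =>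
      intro t ht
      simpa using hB t ht
    | succ n ih =>
      intro t ht
      have e1 : t = (0 + 2*t)/2 := by ring
      have m1 := geo_midpt hρ (mem_Ici0 (le_refl 0)) (mem_Ici0 (by linarith : (0:ℝ) ≤ 2*t))
        (mem_Ici0 (by linarith : (0:ℝ) ≤ (0 + 2*t)/2))
      have m2 := geo_midpt hρ' (mem_Ici0 (le_refl 0)) (mem_Ici0 (by linarith : (0:ℝ) ≤ 2*t))
        (mem_Ici0 (by linarith : (0:ℝ) ≤ (0 + 2*t)/2))
      have := dist_mid_le hC hG m1 m2
    -- dist (ρ ((0+2t)/2)) (ρ' ((0+2t)/2)) ≤ (dist (ρ 0) (ρ' 0) + dist (ρ (2t)) (ρ' (2t)))/2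
      rw [← e1] at this
      rw [h0] at this
      simp only [dist_self] at this
      have h2t := ih (2*t) (by linarith)
      calc dist (ρ t) (ρ' t) ≤ (0 + dist (ρ (2*t)) (ρ' (2*t)))/2 := this
      _ ≤ (0 + C/2^n)/2 := by linarith
      _ = C / 2^(n+1) := by ring
  intro t ht
  have h0' : dist (ρ t) (ρ' t) ≤ 0 := by
    have htend : Tendsto (fun n : ℕ => C / 2^n) atTop (𝓝 0) := by
      have := tendsto_pow_atTop_nhds_zero_of_lt_one
        (by norm_num : (0:ℝ) ≤ 1/2) (by norm_num : (1:ℝ)/2 < 1)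
      have h2 : (fun n : ℕ => C / 2^n) = fun n : ℕ => C * (1/2)^n := by
        funext n; rw [div_pow]; ring
      rw [h2]
      simpa using this.const_mul C
    exact ge_of_tendsto htend (Filter.Eventually.of_forall fun n => key n t ht)
  exact dist_le_zero.1 h0'

end Rays0

section Busemann

variable {X : Type u} [MetricSpace X]

/-- The Busemann function of a ray (as an infimum). -/
noncomputable def bus (σ : ℝ → X) (x : X) : ℝ :=
  ⨅ t : {t : ℝ // 0 ≤ t}, (dist x (σ t.1) - t.1)

lemma bus_bddBelow {σ : ℝ → X} (hσ : IsGeodesicRay σ) (x : X) :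
    BddBelow (Set.range fun t : {t : ℝ // 0 ≤ t} => dist x (σ t.1) - t.1) := by
  refine ⟨-dist x (σ 0), ?_⟩
  rintro y ⟨⟨t, ht⟩, rfl⟩
  simp only
  have h1 : dist (σ 0) (σ t) = t := by
    rw [hσ (mem_Ici0 (le_refl 0)) (mem_Ici0 ht)]
    rw [abs_of_nonpos (by linarith)]
    ring
  have := dist_triangle (σ 0) x (σ t)
  have h2 := dist_comm (σ 0) x
  linarith

lemma bus_le {σ : ℝ → X} (hσ : IsGeodesicRay σ) (x : X) {t : ℝ} (ht : 0 ≤ t) :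
    bus σ x ≤ dist x (σ t) - t :=
  ciInf_le (bus_bddBelow hσ x) ⟨t, ht⟩

lemma bus_lip {σ : ℝ → X} (hσ : IsGeodesicRay σ) (x y : X) :
    bus σ x ≤ bus σ y + dist x y := by
  have : bus σ x - dist x y ≤ bus σ y := by
    apply le_ciInf
    rintro ⟨t, ht⟩
    have h1 := bus_le hσ x ht
    have h2 := dist_triangle x y (σ t)
    simp only
    linarith
  linarith

/-- The defining expression for the Busemann function is antitone. -/
lemma bus_anti {σ : ℝ → X} (hσ : IsGeodesicRay σ) (x : X) {s t : ℝ}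
    (hs : 0 ≤ s) (hst : s ≤ t) :
    dist x (σ t) - t ≤ dist x (σ s) - s := by
  have h1 : dist (σ s) (σ t) = t - s := by
    rw [hσ (mem_Ici0 hs) (mem_Ici0 (by linarith))]
    rw [abs_of_nonpos (by linarith)]
    ring
  have := dist_triangle x (σ s) (σ t)
  linarith

lemma bus_tendsto {σ : ℝ → X} (hσ : IsGeodesicRay σ) (x : X) :
    Tendsto (fun n : ℕ => dist x (σ n) - n) atTop (𝓝 (bus σ x)) := by
  have hanti : Antitone (fun n : ℕ => dist x (σ n) - (n:ℝ)) := by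
    intro m n hmn
    exact bus_anti hσ x (by positivity) (by exact_mod_cast hmn)
  have hbdd : BddBelow (Set.range fun n : ℕ => dist x (σ n) - (n:ℝ)) := by
    refine ⟨bus σ x, ?_⟩
    rintro y ⟨n, rfl⟩
    exact bus_le hσ x (by positivity)
  have h1 := tendsto_atTop_ciInf hanti hbdd
  have h2 : (⨅ n : ℕ, (dist x (σ n) - (n:ℝ))) = bus σ x := by
    apply le_antisymm
    · apply le_ciInf
      rintro ⟨t, ht⟩
      have : (⨅ n : ℕ, (dist x (σ n) - (n:ℝ))) ≤ dist x (σ ⌈t⌉₊) - (⌈t⌉₊ : ℝ) :=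
        ciInf_le hbdd ⌈t⌉₊
      have h3 : dist x (σ ⌈t⌉₊) - (⌈t⌉₊:ℝ) ≤ dist x (σ t) - t :=
        bus_anti hσ x ht (Nat.le_ceil t)
      simp only
      linarith
    · apply le_ciInf
      intro n
      exact bus_le hσ x (by positivity)
  rwa [h2] at h1

end Busemann

end CAT0Geo

namespace CAT0Geo

open Filter Topology

section Coray

variable {X : Type u} [MetricSpace X]

noncomputable def geo (hG : GeodesicSpace X) (x y : X) : ℝ → X :=
  (hG x y).choose

lemma geo_spec (hG : GeodesicSpace X) (x y : X) :
    IsGeodesicOn (geo hG x y) (Set.Icc 0 (dist x y)) ∧ geo hG x y 0 = x ∧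
      geo hG x y (dist x y) = y :=
  (hG x y).choose_spec

lemma dist_ray_nat {σ : ℝ → X} (hσ : IsGeodesicRay σ) (m n : ℕ) (hmn : m ≤ n) :
    dist (σ m) (σ n) = (n:ℝ) - m := by
  rw [hσ (mem_Ici0 (by positivity)) (mem_Ici0 (by positivity))]
  rw [abs_of_nonpos (by simp; exact_mod_cast hmn)]
  ring

set_option maxHeartbeats 1000000 in
/-- The key Cauchy estimate for geodesics from `x` to points along a ray. -/
lemma coray_est (hC : CAT0 X) (hG : GeodesicSpace X) {σ : ℝ → X} (hσ : IsGeodesicRay σ)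
    (x : X) {m n : ℕ} (hmn : m ≤ n) {t : ℝ} (ht : 0 ≤ t)
    (htm : t ≤ dist x (σ m)) (htn : t ≤ dist x (σ n))
    (hm : dist x (σ 0) + 1 ≤ (m:ℝ)) :
    dist (geo hG x (σ m) t) (geo hG x (σ n) t)^2 ≤
      2 * t * ((dist x (σ m) - m) - (dist x (σ n) - n)) := by
  set a := dist x (σ m) with hadef
  set c := dist x (σ n) with hcdef
  set l := (n:ℝ) - m with hldef
  have ha0 : 0 ≤ dist x (σ 0) := dist_nonneg
  have hl0 : 0 ≤ l := by rw [hldef]; simp; exact_mod_cast hmn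
  have hs0m : dist (σ 0) (σ m) = (m:ℝ) := by simpa using dist_ray_nat hσ 0 m (Nat.zero_le m)
  have hs0n : dist (σ 0) (σ n) = (n:ℝ) := by simpa using dist_ray_nat hσ 0 n (Nat.zero_le n)
  have hsmn : dist (σ m) (σ n) = l := dist_ray_nat hσ m n hmn
  have haN : (m:ℝ) - dist x (σ 0) ≤ a := by
    have := dist_triangle (σ 0) x (σ m)
    have h2 := dist_comm (σ 0) x
    rw [hs0m] at this
    linarith
  have hcN : (n:ℝ) - dist x (σ 0) ≤ c := by
    have := dist_triangle (σ 0) x (σ n)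
    have h2 := dist_comm (σ 0) x
    rw [hs0n] at this
    linarith
  have ha : 0 < a := by linarith
  have hc : 0 < c := by linarith
  have hlc : l + 1 ≤ c := by rw [hldef]; linarith
  have hD : 0 ≤ a - c + l := by
    have := bus_anti hσ x (s := (m:ℝ)) (t := (n:ℝ)) (by positivity) (by exact_mod_cast hmn)
    rw [← hadef, ← hcdef] at this
    rw [hldef]
    linarith
  have hcal : c ≤ a + l := by
    have := dist_triangle x (σ m) (σ n)
    rw [hsmn] at this
    linarith
  obtain ⟨hg1, hg10, hg1e⟩ := geo_spec hG x (σ m)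
  obtain ⟨hg2, hg20, hg2e⟩ := geo_spec hG x (σ n)
  set P := geo hG x (σ m) t with hP
  set Q := geo hG x (σ n) t with hQ
  set S := dist (σ n) P with hS
  have htIm : t ∈ Set.Icc (0:ℝ) a := ⟨ht, htm⟩
  have htIn : t ∈ Set.Icc (0:ℝ) c := ⟨ht, htn⟩
  -- first star: external point σ n against the segment [x, σ m]
  have s1 := star hC ha hg1 (σ n) htIm
  rw [hg10, hg1e] at s1
  rw [dist_comm (σ n) x, ← hcdef, dist_comm (σ n) (σ m), hsmn] at s1
  -- second star: external point P against the segment [x, σ n]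
  have s2 := star hC hc hg2 P htIn
  rw [hg20, hg2e] at s2
  have hPx : dist P x = t := by
    have := hg1 (Set.mem_Icc.2 ⟨le_refl 0, le_of_lt ha⟩) htIm
    rw [hg10] at this
    rw [dist_comm]
    rw [this]
    rw [abs_of_nonpos (by linarith)]
    ring
  rw [hPx, dist_comm P (σ n), ← hS] at s2
  -- clear denominators
  have e1 : ((a-t)*c^2 + (t-0)*l^2)/(a-0) - (t-0)*(a-t)
      = ((a-t)*c^2 + t*l^2 - t*(a-t)*a)/a := by
    simp only [sub_zero]
    field_simp
  have e2 : ((c-t)*t^2 + (t-0)*S^2)/(c-0) - (t-0)*(c-t)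
      = ((c-t)*t^2 + t*S^2 - t*(c-t)*c)/c := by
    simp only [sub_zero]
    field_simp
  rw [e1] at s1
  rw [e2] at s2
  have s1m : (S^2) * a ≤ (a-t)*c^2 + t*l^2 - t*(a-t)*a := by
    rw [← le_div_iff₀ ha]
    have : dist (σ n) P^2 = S^2 := by rw [hS]
    rw [← this]
    exact s1
  have s2m : dist P Q^2 * c ≤ (c-t)*t^2 + t*S^2 - t*(c-t)*c := by
    rw [← le_div_iff₀ hc]
    exact s2
  have key : dist P Q^2 * (c*a) ≤ (c-t)*t^2*a + t*(S^2*a) - t*(c-t)*c*a := by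
    have := mul_le_mul_of_nonneg_right s2m (le_of_lt ha)
    calc dist P Q^2 * (c*a) = dist P Q^2 * c * a := by ring
    _ ≤ ((c-t)*t^2 + t*S^2 - t*(c-t)*c) * a := this
    _ = (c-t)*t^2*a + t*(S^2*a) - t*(c-t)*c*a := by ring
  have key2 : dist P Q^2 * (c*a) ≤ (c-t)*t^2*a + t*((a-t)*c^2 + t*l^2 - t*(a-t)*a)
      - t*(c-t)*c*a := by
    have hmul := mul_le_mul_of_nonneg_left s1m ht
    linarith
  have hexp : (c-t)*t^2*a + t*((a-t)*c^2 + t*l^2 - t*(a-t)*a) - t*(c-t)*c*a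
      = t^2*((l+c-a)*(a-c+l)) := by ring
  rw [hexp] at key2
  have hbound : t^2*((l+c-a)*(a-c+l)) ≤ (2*t*(a-c+l))*(c*a) := by
    have h1 : t*l ≤ a*c := by nlinarith
    have h2 : t*(c-a) ≤ a*c := by nlinarith
    nlinarith [mul_nonneg (mul_nonneg ht ht) hD, mul_nonneg ht hD]
  have hfinal : dist P Q^2 * (c*a) ≤ (2*t*(a-c+l))*(c*a) := le_trans key2 hbound
  have hca : 0 < c*a := mul_pos hc ha
  have hfin2 : dist P Q^2 ≤ 2*t*(a-c+l) := le_of_mul_le_mul_right hfinal hca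
  have heq : 2*t*(a-c+l) = 2*t*((a-(m:ℝ)) - (c-(n:ℝ))) := by rw [hldef]; ring
  rw [heq] at hfin2
  exact hfin2

end Coray

end CAT0Geo

namespace CAT0Geo

open Filter Topology

section Coray2

variable {X : Type u} [MetricSpace X]

lemma ray_dist_lower {σ : ℝ → X} (hσ : IsGeodesicRay σ) (x : X) (n : ℕ) :
    (n:ℝ) - dist x (σ 0) ≤ dist x (σ n) := by
  have h1 : dist (σ 0) (σ n) = (n:ℝ) := by simpa using dist_ray_nat hσ 0 n (Nat.zero_le n)
  have := dist_triangle (σ 0) x (σ n)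
  have h2 := dist_comm (σ 0) x
  linarith

lemma ray_dist_upper {σ : ℝ → X} (hσ : IsGeodesicRay σ) (x : X) (n : ℕ) :
    dist x (σ n) ≤ (n:ℝ) + dist x (σ 0) := by
  have h1 : dist (σ 0) (σ n) = (n:ℝ) := by simpa using dist_ray_nat hσ 0 n (Nat.zero_le n)
  have := dist_triangle x (σ 0) (σ n)
  linarith

/-- The asymptotic ray from `x`, constructed as limit of segments `[x, σ(n)]`. -/
noncomputable def coray (hG : GeodesicSpace X) (σ : ℝ → X) (x : X) : ℝ → X :=
  haveI : Nonempty X := ⟨x⟩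
  fun t => limUnder atTop (fun n : ℕ => geo hG x (σ n) (max t 0))

lemma coray_cauchy (hC : CAT0 X) (hG : GeodesicSpace X) (hcpl : CompleteSpace X)
    {σ : ℝ → X} (hσ : IsGeodesicRay σ) (x : X) (t : ℝ) :
    ∃ p : X, Tendsto (fun n : ℕ => geo hG x (σ n) (max t 0)) atTop (𝓝 p) := by
  haveI := hcpl
  apply cauchySeq_tendsto_of_complete
  rw [Metric.cauchySeq_iff]
  intro ε hε
  set T := max t 0 with hT
  have hT0 : 0 ≤ T := le_max_right _ _
  set δ := ε^2/(2*T+1) with hδ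
  have hδ0 : 0 < δ := by positivity
  obtain ⟨N₁, hN₁⟩ := (Metric.tendsto_atTop.1 (bus_tendsto hσ x)) δ hδ0
  obtain ⟨N₂, hN₂⟩ := exists_nat_ge (dist x (σ 0) + 1 + T)
  refine ⟨max N₁ N₂, ?_⟩
  have key : ∀ m n : ℕ, max N₁ N₂ ≤ m → max N₁ N₂ ≤ n → m ≤ n →
      dist (geo hG x (σ m) T) (geo hG x (σ n) T) < ε := by
    intro m n hm hn hmn
    have hmN₁ : N₁ ≤ m := le_trans (le_max_left _ _) hm
    have hmN₂ : (dist x (σ 0) + 1 + T) ≤ (m:ℝ) := by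
      calc dist x (σ 0) + 1 + T ≤ (N₂:ℝ) := hN₂
      _ ≤ m := by exact_mod_cast le_trans (le_max_right _ _) hm
    have hnN₂ : (dist x (σ 0) + 1 + T) ≤ (n:ℝ) := by
      calc dist x (σ 0) + 1 + T ≤ (m:ℝ) := hmN₂
      _ ≤ n := by exact_mod_cast hmn
    have htm : T ≤ dist x (σ m) := by
      have := ray_dist_lower hσ x m
      linarith
    have htn : T ≤ dist x (σ n) := by
      have := ray_dist_lower hσ x n
      linarith
    have hma : dist x (σ 0) + 1 ≤ (m:ℝ) := by linarith
    have hest := coray_est hC hG hσ x hmn hT0 htm htn hma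
    have hb1 : |dist x (σ m) - m - bus σ x| < δ := by
      have := hN₁ m hmN₁
      rwa [Real.dist_eq] at this
    have hb2 : bus σ x ≤ dist x (σ n) - n := bus_le hσ x (by positivity)
    rw [abs_lt] at hb1
    have hD : (dist x (σ m) - m) - (dist x (σ n) - n) < δ := by linarith
    have hsq : dist (geo hG x (σ m) T) (geo hG x (σ n) T)^2 < 2*T*δ + δ := by
      have h2T : 0 ≤ 2*T*((dist x (σ m) - m) - (dist x (σ n) - n)) → True := fun _ => trivial
      nlinarith [hest, hT0, hδ0]
    have hlt : 2*T*δ + δ = ε^2 := by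
      rw [hδ]
      field_simp
    have : dist (geo hG x (σ m) T) (geo hG x (σ n) T)^2 < ε^2 := by
      rw [← hlt]
      exact hsq
    nlinarith [dist_nonneg (x := geo hG x (σ m) T) (y := geo hG x (σ n) T), hε]
  intro m hm n hn
  rcases le_total m n with h | h
  · exact key m n hm hn h
  · rw [dist_comm]
    exact key n m hn hm h

lemma coray_tendsto (hC : CAT0 X) (hG : GeodesicSpace X) (hcpl : CompleteSpace X)
    {σ : ℝ → X} (hσ : IsGeodesicRay σ) (x : X) {t : ℝ} (ht : 0 ≤ t) :
    Tendsto (fun n : ℕ => geo hG x (σ n) t) atTop (𝓝 (coray hG σ x t)) := by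
  obtain ⟨p, hp⟩ := coray_cauchy hC hG hcpl hσ x t
  haveI : Nonempty X := ⟨x⟩
  have h1 : coray hG σ x t = p := hp.limUnder_eq
  rw [h1]
  have hmax : max t 0 = t := max_eq_left ht
  rw [hmax] at hp
  exact hp

lemma coray_ray (hC : CAT0 X) (hG : GeodesicSpace X) (hcpl : CompleteSpace X)
    {σ : ℝ → X} (hσ : IsGeodesicRay σ) (x : X) :
    IsGeodesicRay (coray hG σ x) := by
  intro u hu v hv
  simp only [Set.mem_Ici] at hu hv
  have h1 := (coray_tendsto hC hG hcpl hσ x hu).dist (coray_tendsto hC hG hcpl hσ x hv)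
  obtain ⟨N, hN⟩ := exists_nat_ge (max u v + dist x (σ 0))
  have hev : ∀ᶠ n : ℕ in atTop, (fun n : ℕ => |u - v|) n
      = dist (geo hG x (σ n) u) (geo hG x (σ n) v) := by
    filter_upwards [eventually_ge_atTop N] with n hn
    have hnr : max u v + dist x (σ 0) ≤ (n:ℝ) := by
      calc max u v + dist x (σ 0) ≤ (N:ℝ) := hN
      _ ≤ n := by exact_mod_cast hn
    have hlow := ray_dist_lower hσ x n
    have hu' : u ≤ dist x (σ n) := by
      have := le_max_left u v
      linarith
    have hv' : v ≤ dist x (σ n) := by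
      have := le_max_right u v
      linarith
    exact ((geo_spec hG x (σ n)).1 ⟨hu, hu'⟩ ⟨hv, hv'⟩).symm
  exact tendsto_nhds_unique h1 (Tendsto.congr' hev tendsto_const_nhds)

lemma coray_zero (hC : CAT0 X) (hG : GeodesicSpace X) (hcpl : CompleteSpace X)
    {σ : ℝ → X} (hσ : IsGeodesicRay σ) (x : X) :
    coray hG σ x 0 = x := by
  have h1 := coray_tendsto hC hG hcpl hσ x (le_refl 0)
  have h2 : (fun n : ℕ => geo hG x (σ n) 0) = fun _ : ℕ => x := by
    funext n
    exact (geo_spec hG x (σ n)).2.1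
  rw [h2] at h1
  exact tendsto_nhds_unique h1 tendsto_const_nhds

lemma coray_approach (hC : CAT0 X) (hG : GeodesicSpace X) (hcpl : CompleteSpace X)
    {σ : ℝ → X} (hσ : IsGeodesicRay σ) (x : X) {t : ℝ} (ht : 0 ≤ t) :
    Tendsto (fun n : ℕ => dist (coray hG σ x t) (geo hG x (σ n) t)) atTop (𝓝 0) := by
  have := Tendsto.dist (tendsto_const_nhds (x := coray hG σ x t) (f := atTop))
    (coray_tendsto hC hG hcpl hσ x ht)
  simpa using this

end Coray2

end CAT0Geo

namespace CAT0Geo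

open Filter Topology

section Coray3

variable {X : Type u} [MetricSpace X]

set_option maxHeartbeats 800000 in
/-- The co-ray stays within bounded distance of the base ray. -/
lemma coray_near (hC : CAT0 X) (hG : GeodesicSpace X) (hcpl : CompleteSpace X)
    {σ : ℝ → X} (hσ : IsGeodesicRay σ) (x : X) {s : ℝ} (hs : 0 ≤ s) :
    dist (coray hG σ x s) (σ s) ≤ 2 * dist x (σ 0) := by
  set a0 := dist x (σ 0) with ha0def
  have ha0 : 0 ≤ a0 := dist_nonneg
  -- pointwise estimate at level n
  have hlevel : ∀ n : ℕ, a0 + 1 ≤ (n:ℝ) → s + a0 ≤ (n:ℝ) →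
      dist (geo hG x (σ n) s) (σ s) ≤ 2 * a0 := by
    intro n hn hsn0
    have hsn : s ≤ (n:ℝ) := by linarith
    set an := dist x (σ n) with handef
    have hlow := ray_dist_lower hσ x n
    have hup := ray_dist_upper hσ x n
    have han : 0 < an := by rw [handef]; linarith
    have hn0 : (0:ℝ) < n := by linarith
    obtain ⟨hgeo, hgeo0, hgeoe⟩ := geo_spec hG x (σ n)
    set φ : ℝ → ℝ := fun l => dist (geo hG x (σ n) (l * an)) (σ (l * n)) with hφ
    have hmidφ : ∀ u ∈ Set.Icc (0:ℝ) 1, ∀ v ∈ Set.Icc (0:ℝ) 1,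
        φ ((u+v)/2) ≤ (φ u + φ v)/2 := by
      intro u hu v hv
      have e1 : (u+v)/2 * an = (u*an + v*an)/2 := by ring
      have e2 : (u+v)/2 * (n:ℝ) = (u*n + v*n)/2 := by ring
      have hm1 : u * an ∈ Set.Icc (0:ℝ) an := by
        constructor
        · exact mul_nonneg hu.1 (le_of_lt han)
        · nlinarith [hu.1, hu.2]
      have hm2 : v * an ∈ Set.Icc (0:ℝ) an := by
        constructor
        · exact mul_nonneg hv.1 (le_of_lt han)
        · nlinarith [hv.1, hv.2]
      have hmm : (u*an + v*an)/2 ∈ Set.Icc (0:ℝ) an := by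
        obtain ⟨c1, c2⟩ := hm1; obtain ⟨c3, c4⟩ := hm2
        constructor <;> [linarith; linarith]
      have hs1 : u * (n:ℝ) ∈ Set.Ici (0:ℝ) := mem_Ici0 (mul_nonneg hu.1 (le_of_lt hn0))
      have hs2 : v * (n:ℝ) ∈ Set.Ici (0:ℝ) := mem_Ici0 (mul_nonneg hv.1 (le_of_lt hn0))
      have hsm : (u*(n:ℝ) + v*n)/2 ∈ Set.Ici (0:ℝ) := by
        simp only [Set.mem_Ici] at hs1 hs2 ⊢
        linarith
      have mg := geo_midpt hgeo hm1 hm2 hmm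
      have ms := geo_midpt hσ hs1 hs2 hsm
      rw [hφ]
      simp only
      rw [e1, e2]
      exact dist_mid_le hC hG mg ms
    have hcontφ : ContinuousOn φ (Set.Icc (0:ℝ) 1) := by
      apply continuousOn_dist_lip (L := an + n) (by positivity)
      · intro u hu v hv
        have hm1 : u * an ∈ Set.Icc (0:ℝ) an :=
          ⟨mul_nonneg hu.1 (le_of_lt han), by nlinarith [hu.1, hu.2]⟩
        have hm2 : v * an ∈ Set.Icc (0:ℝ) an :=
          ⟨mul_nonneg hv.1 (le_of_lt han), by nlinarith [hv.1, hv.2]⟩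
        rw [hgeo hm1 hm2]
        have : u * an - v * an = (u - v) * an := by ring
        rw [this, abs_mul, abs_of_pos han]
        have := abs_nonneg (u - v)
        nlinarith
      · intro u hu v hv
        rw [hσ (mem_Ici0 (mul_nonneg hu.1 (le_of_lt hn0)))
          (mem_Ici0 (mul_nonneg hv.1 (le_of_lt hn0)))]
        have : u * (n:ℝ) - v * n = (u - v) * n := by ring
        rw [this, abs_mul, abs_of_pos hn0]
        have := abs_nonneg (u - v)
        nlinarith
    have hchord := midpt_convex_chord zero_le_one hcontφ hmidφ
    set l : ℝ := s / n with hldef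
    have hl : l ∈ Set.Icc (0:ℝ) 1 := by
      constructor
      · exact div_nonneg hs (le_of_lt hn0)
      · rw [div_le_one hn0]; exact hsn
    have := hchord l hl
    have harg : (1-l)*0 + l*1 = l := by ring
    rw [harg] at this
    have hφ0 : φ 0 = a0 := by
      rw [hφ]
      simp only [zero_mul]
      rw [hgeo0, ha0def]
    have hφ1 : φ 1 = 0 := by
      rw [hφ]
      simp only [one_mul]
      rw [hgeoe]
      simp
    rw [hφ0, hφ1] at this
    have hφl : φ l ≤ a0 := by
      have := hl.1; have := hl.2
      nlinarith
    -- now compare the two points on the geodesic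
    have hln : l * (n:ℝ) = s := by
      rw [hldef]
      field_simp
    have hdist1 : dist (geo hG x (σ n) s) (geo hG x (σ n) (l * an)) ≤ a0 := by
      have hsIcc : s ∈ Set.Icc (0:ℝ) an := ⟨hs, by rw [handef]; linarith⟩
      have hlIcc : l * an ∈ Set.Icc (0:ℝ) an :=
        ⟨mul_nonneg hl.1 (le_of_lt han), by nlinarith [hl.1, hl.2]⟩
      rw [hgeo hsIcc hlIcc]
      have e : s - l * an = l * ((n:ℝ) - an) := by
        rw [← hln]; ring
      rw [e, abs_mul]
      have h1 : |l| ≤ 1 := by rw [abs_of_nonneg hl.1]; exact hl.2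
      have h2 : |(n:ℝ) - an| ≤ a0 := by
        rw [abs_le]
        constructor <;> [linarith; linarith]
      calc |l| * |(n:ℝ) - an| ≤ 1 * a0 :=
        mul_le_mul h1 h2 (abs_nonneg _) zero_le_one
      _ = a0 := one_mul _
    have := dist_triangle (geo hG x (σ n) s) (geo hG x (σ n) (l*an)) (σ s)
    have hφl' : dist (geo hG x (σ n) (l*an)) (σ s) ≤ a0 := by
      have : φ l = dist (geo hG x (σ n) (l*an)) (σ (l*n)) := rfl
      rw [hln] at this
      rw [← this]
      exact hφl
    linarith
  -- pass to the limit
  have happ := coray_approach hC hG hcpl hσ x hs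
  have htends : Tendsto (fun n : ℕ => dist (coray hG σ x s) (geo hG x (σ n) s) + 2*a0)
      atTop (𝓝 (0 + 2*a0)) := happ.add tendsto_const_nhds
  rw [zero_add] at htends
  apply ge_of_tendsto htends
  obtain ⟨N, hN⟩ := exists_nat_ge (max (a0 + 1) (s + a0))
  filter_upwards [eventually_ge_atTop N] with n hn
  have hnr : max (a0+1) (s+a0) ≤ (n:ℝ) := by
    calc max (a0+1) (s+a0) ≤ (N:ℝ) := hN
    _ ≤ n := by exact_mod_cast hn
  have h1 : a0 + 1 ≤ (n:ℝ) := le_trans (le_max_left _ _) hnr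
  have h2 : s + a0 ≤ (n:ℝ) := le_trans (le_max_right _ _) hnr
  have := hlevel n h1 h2
  have htri := dist_triangle (coray hG σ x s) (geo hG x (σ n) s) (σ s)
  linarith

/-- Exact decay of the Busemann function along co-rays. -/
lemma coray_bus (hC : CAT0 X) (hG : GeodesicSpace X) (hcpl : CompleteSpace X)
    {σ : ℝ → X} (hσ : IsGeodesicRay σ) (x : X) {u : ℝ} (hu : 0 ≤ u) :
    bus σ (coray hG σ x u) = bus σ x - u := by
  have hray := coray_ray hC hG hcpl hσ x
  have h0 := coray_zero hC hG hcpl hσ x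
  have hdxc : dist x (coray hG σ x u) = u := by
    have := hray (mem_Ici0 (le_refl 0)) (mem_Ici0 hu)
    rw [h0] at this
    rw [this, abs_of_nonpos (by linarith)]
    ring
  apply le_antisymm
  · -- bus (coray u) ≤ bus x - u
    have key : ∀ ε > 0, bus σ (coray hG σ x u) ≤ bus σ x - u + ε := by
      intro ε hε
      have happ := coray_approach hC hG hcpl hσ x hu
      have hev1 : ∀ᶠ n : ℕ in atTop,
          dist (coray hG σ x u) (geo hG x (σ n) u) < ε/2 := by
        have := (Metric.tendsto_atTop.1 happ) (ε/2) (by positivity)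
        obtain ⟨N, hN⟩ := this
        filter_upwards [eventually_ge_atTop N] with n hn
        have := hN n hn
        rwa [Real.dist_eq, sub_zero, abs_of_nonneg dist_nonneg] at this
      have hev2 : ∀ᶠ n : ℕ in atTop, dist x (σ n) - n - bus σ x < ε/2 := by
        obtain ⟨N, hN⟩ := (Metric.tendsto_atTop.1 (bus_tendsto hσ x)) (ε/2) (by positivity)
        filter_upwards [eventually_ge_atTop N] with n hn
        have := hN n hn
        rw [Real.dist_eq, abs_lt] at this
        linarith [this.2]
      have hev3 : ∀ᶠ n : ℕ in atTop, u ≤ dist x (σ n) := by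
        obtain ⟨N, hN⟩ := exists_nat_ge (u + dist x (σ 0))
        filter_upwards [eventually_ge_atTop N] with n hn
        have hnr : u + dist x (σ 0) ≤ (n:ℝ) := by
          calc u + dist x (σ 0) ≤ (N:ℝ) := hN
          _ ≤ n := by exact_mod_cast hn
        have := ray_dist_lower hσ x n
        linarith
      obtain ⟨n, h1, h2, h3⟩ := (hev1.and (hev2.and hev3)).exists
      obtain ⟨hgeo, hgeo0, hgeoe⟩ := geo_spec hG x (σ n)
      have hend : dist (geo hG x (σ n) u) (σ n) = dist x (σ n) - u := by
        have hm1 : u ∈ Set.Icc (0:ℝ) (dist x (σ n)) := ⟨hu, h3⟩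
        have hm2 : dist x (σ n) ∈ Set.Icc (0:ℝ) (dist x (σ n)) := ⟨dist_nonneg, le_refl _⟩
        have := hgeo hm1 hm2
        rw [hgeoe] at this
        rw [this, abs_of_nonpos (by linarith)]
        ring
      have hb := bus_le hσ (coray hG σ x u) (t := (n:ℝ)) (by positivity)
      have htri := dist_triangle (coray hG σ x u) (geo hG x (σ n) u) (σ n)
      rw [hend] at htri
      linarith
    by_contra hcon
    push_neg at hcon
    have := key ((bus σ (coray hG σ x u) - (bus σ x - u))/2) (by linarith)
    linarith
  · -- bus x - u ≤ bus (coray u)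
    have := bus_lip hσ x (coray hG σ x u)
    rw [hdxc] at this
    linarith

set_option maxHeartbeats 800000 in
/-- The fundamental comparison upper bound for distances to points on co-rays. -/
lemma coray_F (hC : CAT0 X) (hG : GeodesicSpace X) (hcpl : CompleteSpace X)
    {σ : ℝ → X} (hσ : IsGeodesicRay σ) (x : X) (P : X) {u : ℝ} (hu : 0 ≤ u) :
    dist P (coray hG σ x u)^2
      ≤ dist P x^2 + 2*u*(bus σ P - bus σ x) + u^2 := by
  set p := dist P x with hpdef
  set κ := bus σ P - bus σ x with hκdef
  set R : ℕ → ℝ := fun n =>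
    p^2 + u^2 + u*((dist P (σ n) - dist x (σ n))*((dist P (σ n) - dist x (σ n))
      * (1/dist x (σ n)) + 2)) - u*p^2*(1/dist x (σ n)) with hRdef
  have hRtend : Tendsto R atTop (𝓝 (p^2 + u^2 + u*(κ*(κ*0 + 2)) - u*p^2*0)) := by
    have hE : Tendsto (fun n : ℕ => dist P (σ n) - dist x (σ n)) atTop (𝓝 κ) := by
      have := (bus_tendsto hσ P).sub (bus_tendsto hσ x)
      rw [hκdef]
      apply this.congr
      intro n
      ring
    have hInv : Tendsto (fun n : ℕ => 1/dist x (σ n)) atTop (𝓝 0) := by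
      have h1 : Tendsto (fun n : ℕ => (n:ℝ) - dist x (σ 0)) atTop atTop := by
        apply tendsto_atTop_add_const_right
        exact tendsto_natCast_atTop_atTop
      have h2 : Tendsto (fun n : ℕ => dist x (σ n)) atTop atTop :=
        tendsto_atTop_mono (ray_dist_lower hσ x) h1
      have h3 : Tendsto (fun n : ℕ => (dist x (σ n))⁻¹) atTop (𝓝 0) := fun s hs => h2.inv_tendsto_atTop hs
      simpa [one_div] using h3
    rw [hRdef]
    apply Tendsto.sub
    · apply Tendsto.add
      · exact tendsto_const_nhds
      · exact ((hE.mul ((hE.mul hInv).add tendsto_const_nhds)).const_mul u)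
    · exact ((hInv.const_mul (u*p^2)).congr (fun n => by ring))
  have hEv : ∀ᶠ n : ℕ in atTop, dist P (geo hG x (σ n) u)^2 ≤ R n := by
    obtain ⟨N, hN⟩ := exists_nat_ge (u + dist x (σ 0) + 1)
    filter_upwards [eventually_ge_atTop N] with n hn
    have hnr : u + dist x (σ 0) + 1 ≤ (n:ℝ) := by
      calc u + dist x (σ 0) + 1 ≤ (N:ℝ) := hN
      _ ≤ n := by exact_mod_cast hn
    have hlow := ray_dist_lower hσ x n
    have han : 0 < dist x (σ n) := by linarith
    have hun : u ≤ dist x (σ n) := by linarith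
    obtain ⟨hgeo, hgeo0, hgeoe⟩ := geo_spec hG x (σ n)
    have hstar := star hC han hgeo P ⟨hu, hun⟩
    rw [hgeo0, hgeoe] at hstar
    have herw : ((dist x (σ n) - u)*dist P x^2 + (u-0)*dist P (σ n)^2)/(dist x (σ n) - 0)
        - (u-0)*(dist x (σ n)-u) = R n := by
      rw [hRdef]
      simp only
      rw [hpdef]
      have hne : dist x (σ n) ≠ 0 := ne_of_gt han
      field_simp
      ring
    rw [herw] at hstar
    exact hstar
  have hLHS : Tendsto (fun n : ℕ => dist P (geo hG x (σ n) u)^2) atTop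
      (𝓝 (dist P (coray hG σ x u)^2)) := by
    have := (tendsto_const_nhds (x := P) (f := atTop)).dist
      (coray_tendsto hC hG hcpl hσ x hu)
    exact this.pow 2
  have hfin := le_of_tendsto_of_tendsto hLHS hRtend hEv
  calc dist P (coray hG σ x u)^2 ≤ p^2 + u^2 + u*(κ*(κ*0 + 2)) - u*p^2*0 := hfin
  _ = p^2 + 2*u*κ + u^2 := by ring
  _ = dist P x^2 + 2*u*(bus σ P - bus σ x) + u^2 := by rw [hpdef, hκdef]

end Coray3

end CAT0Geo

namespace CAT0Geo

open Filter Topology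

section ClassLevel

variable {X : Type u} [MetricSpace X] {ξ : IdealBoundary X}

lemma asymp_of_eqvgen {ρ τ : Rays X} (h' : Relation.EqvGen (asymp X) ρ τ) :
    ∃ C, ∀ t, 0 ≤ t → dist (ρ.1 t) (τ.1 t) ≤ C := by
  induction h' with
  | rel a b hab =>
    obtain ⟨C, hC⟩ := hab
    exact ⟨C, hC⟩
  | refl a => exact ⟨0, fun t ht => by simp⟩
  | symm a b hab ih =>
    obtain ⟨C, hC⟩ := ih
    exact ⟨C, fun t ht => by rw [dist_comm]; exact hC t ht⟩
  | trans a b c hab hbc ih1 ih2 =>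
    obtain ⟨C1, h1⟩ := ih1
    obtain ⟨C2, h2⟩ := ih2
    refine ⟨C1+C2, fun t ht => ?_⟩
    calc dist (a.1 t) (c.1 t) ≤ dist (a.1 t) (b.1 t) + dist (b.1 t) (c.1 t) :=
      dist_triangle _ _ _
    _ ≤ C1 + C2 := add_le_add (h1 t ht) (h2 t ht)

lemma asymp_of_rayClass_eq {ρ τ : Rays X} (h : rayClass ρ = rayClass τ) :
    ∃ C, ∀ t, 0 ≤ t → dist (ρ.1 t) (τ.1 t) ≤ C :=
  asymp_of_eqvgen (Quot.eqvGen_exact h)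

lemma class_bound (ρ τ : raysTo ξ) :
    ∃ C, ∀ t, 0 ≤ t → dist (ρ.1.1 t) (τ.1.1 t) ≤ C :=
  asymp_of_rayClass_eq (ρ.2.trans τ.2.symm)

lemma class_bound_shift (ρ τ : raysTo ξ) {a b : ℝ} (ha : 0 ≤ a) (hb : 0 ≤ b) :
    ∃ C, ∀ w, 0 ≤ w → dist (ρ.1.1 (a+w)) (τ.1.1 (b+w)) ≤ C := by
  obtain ⟨C, hC⟩ := class_bound ρ τ
  refine ⟨C + |a - b|, fun w hw => ?_⟩
  have h1 : dist (τ.1.1 (a+w)) (τ.1.1 (b+w)) = |a - b| := by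
    rw [τ.1.2 (mem_Ici0 (by linarith)) (mem_Ici0 (by linarith))]
    congr 1
    ring
  calc dist (ρ.1.1 (a+w)) (τ.1.1 (b+w))
      ≤ dist (ρ.1.1 (a+w)) (τ.1.1 (a+w)) + dist (τ.1.1 (a+w)) (τ.1.1 (b+w)) :=
        dist_triangle _ _ _
  _ ≤ C + |a - b| := by rw [h1]; exact add_le_add_left (hC _ (by linarith)) _

/-- The co-ray from any point, bundled as a ray in the class `ξ`. -/
lemma coray_class (hC : CAT0 X) (hG : GeodesicSpace X) (hcpl : CompleteSpace X)
    (σ₀ : Rays X) (hσ₀ : rayClass σ₀ = ξ) (x : X) :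
    rayClass (⟨coray hG σ₀.1 x, coray_ray hC hG hcpl σ₀.2 x⟩ : Rays X) = ξ := by
  rw [← hσ₀]
  apply Quot.sound
  exact ⟨2 * dist x (σ₀.1 0), fun t ht => coray_near hC hG hcpl σ₀.2 x ht⟩

lemma ray_eq_coray (hC : CAT0 X) (hG : GeodesicSpace X) (hcpl : CompleteSpace X)
    (σ₀ : Rays X) (hσ₀ : rayClass σ₀ = ξ) (ρ : raysTo ξ) {t₀ : ℝ} (ht₀ : 0 ≤ t₀) :
    ∀ s, 0 ≤ s → ρ.1.1 (t₀ + s) = coray hG σ₀.1 (ρ.1.1 t₀) s := by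
  obtain ⟨C, hC'⟩ := class_bound ρ ⟨σ₀, hσ₀⟩
  have hB : ∀ s, 0 ≤ s →
      dist (ρ.1.1 (t₀ + s)) (coray hG σ₀.1 (ρ.1.1 t₀) s)
        ≤ C + t₀ + 2 * dist (ρ.1.1 t₀) (σ₀.1 0) := by
    intro s hs
    have h1 : dist (ρ.1.1 (t₀+s)) (σ₀.1 (t₀+s)) ≤ C := hC' _ (by linarith)
    have h2 : dist (σ₀.1 (t₀+s)) (σ₀.1 s) = t₀ := by
      rw [σ₀.2 (mem_Ici0 (by linarith)) (mem_Ici0 hs)]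
      rw [abs_of_nonneg (by linarith)]
      ring
    have h3 : dist (σ₀.1 s) (coray hG σ₀.1 (ρ.1.1 t₀) s) ≤ 2 * dist (ρ.1.1 t₀) (σ₀.1 0) := by
      rw [dist_comm]
      exact coray_near hC hG hcpl σ₀.2 (ρ.1.1 t₀) hs
    calc dist (ρ.1.1 (t₀ + s)) (coray hG σ₀.1 (ρ.1.1 t₀) s)
        ≤ dist (ρ.1.1 (t₀+s)) (σ₀.1 (t₀+s)) + dist (σ₀.1 (t₀+s)) (σ₀.1 s)
          + dist (σ₀.1 s) (coray hG σ₀.1 (ρ.1.1 t₀) s) := dist_triangle4 _ _ _ _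
    _ ≤ C + t₀ + 2 * dist (ρ.1.1 t₀) (σ₀.1 0) := by
        rw [h2]
        have := add_le_add (add_le_add h1 (le_refl t₀)) h3
        linarith
  have := ray_unique hC hG (ray_shift ρ.1.2 ht₀) (coray_ray hC hG hcpl σ₀.2 (ρ.1.1 t₀))
    ?_ hB
  · exact this
  · rw [coray_zero hC hG hcpl σ₀.2 (ρ.1.1 t₀)]
    simp

/-- Exact unit-speed decay of the Busemann function along any ray in the class. -/
lemma ray_bus (hC : CAT0 X) (hG : GeodesicSpace X) (hcpl : CompleteSpace X)
    (σ₀ : Rays X) (hσ₀ : rayClass σ₀ = ξ) (ρ : raysTo ξ) {t : ℝ} (ht : 0 ≤ t) :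
    bus σ₀.1 (ρ.1.1 t) = bus σ₀.1 (ρ.1.1 0) - t := by
  have h1 := ray_eq_coray hC hG hcpl σ₀ hσ₀ ρ (le_refl 0) t ht
  rw [zero_add] at h1
  rw [h1]
  exact coray_bus hC hG hcpl σ₀.2 (ρ.1.1 0) ht

/-- Alignment step: matching Busemann levels decreases distance (Pythagorean gain). -/
lemma align_pair (hC : CAT0 X) (hG : GeodesicSpace X) (hcpl : CompleteSpace X)
    (σ₀ : Rays X) (hσ₀ : rayClass σ₀ = ξ) (ρ τ : raysTo ξ) {t₁ t₂ : ℝ}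
    (h₁ : 0 ≤ t₁) (h₂ : 0 ≤ t₂)
    (hlev : bus σ₀.1 (ρ.1.1 t₁) ≤ bus σ₀.1 (τ.1.1 t₂)) :
    dist (ρ.1.1 t₁) (τ.1.1 (t₂ + (bus σ₀.1 (τ.1.1 t₂) - bus σ₀.1 (ρ.1.1 t₁))))^2
      ≤ dist (ρ.1.1 t₁) (τ.1.1 t₂)^2
        - (bus σ₀.1 (τ.1.1 t₂) - bus σ₀.1 (ρ.1.1 t₁))^2 := by
  set v := bus σ₀.1 (τ.1.1 t₂) - bus σ₀.1 (ρ.1.1 t₁) with hv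
  have hv0 : 0 ≤ v := by rw [hv]; linarith
  have hF := coray_F hC hG hcpl σ₀.2 (τ.1.1 t₂) (ρ.1.1 t₁) hv0
  have hco := ray_eq_coray hC hG hcpl σ₀ hσ₀ τ h₂ v hv0
  rw [← hco] at hF
  have hbb : bus σ₀.1 (ρ.1.1 t₁) - bus σ₀.1 (τ.1.1 t₂) = -v := by rw [hv]; ring
  rw [hbb] at hF
  calc dist (ρ.1.1 t₁) (τ.1.1 (t₂ + v))^2
      ≤ dist (ρ.1.1 t₁) (τ.1.1 t₂)^2 + 2*v*(-v) + v^2 := hF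
  _ = dist (ρ.1.1 t₁) (τ.1.1 t₂)^2 - v^2 := by ring

/-- The level-normalizing parameter of a ray in the class. -/
noncomputable def albase (σ₀ : Rays X) (ρ : raysTo ξ) : ℝ := bus σ₀.1 (ρ.1.1 0)

/-- Aligned (Busemann-synchronized) pairs are closer than arbitrary pairs. -/
lemma aligned_le_pair (hC : CAT0 X) (hG : GeodesicSpace X) (hcpl : CompleteSpace X)
    (σ₀ : Rays X) (hσ₀ : rayClass σ₀ = ξ) (ρ τ : raysTo ξ) {t₁ t₂ s : ℝ}
    (h₁ : 0 ≤ t₁) (h₂ : 0 ≤ t₂)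
    (hs₁ : t₁ - albase σ₀ ρ ≤ s) (hs₂ : t₂ - albase σ₀ τ ≤ s) :
    dist (ρ.1.1 (albase σ₀ ρ + s)) (τ.1.1 (albase σ₀ τ + s))
      ≤ dist (ρ.1.1 t₁) (τ.1.1 t₂) := by
  set A := albase σ₀ ρ with hA
  set B := albase σ₀ τ with hB
  have hlevρ : bus σ₀.1 (ρ.1.1 t₁) = A - t₁ := ray_bus hC hG hcpl σ₀ hσ₀ ρ h₁
  have hlevτ : bus σ₀.1 (τ.1.1 t₂) = B - t₂ := ray_bus hC hG hcpl σ₀ hσ₀ τ h₂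
  -- wlog the ρ-point is at least as deep
  rcases le_total (A - t₁) (B - t₂) with hcase | hcase
  · -- ρ-point deeper: move τ
    have hlev : bus σ₀.1 (ρ.1.1 t₁) ≤ bus σ₀.1 (τ.1.1 t₂) := by
      rw [hlevρ, hlevτ]; exact hcase
    have hstep := align_pair hC hG hcpl σ₀ hσ₀ ρ τ h₁ h₂ hlev
    set v := bus σ₀.1 (τ.1.1 t₂) - bus σ₀.1 (ρ.1.1 t₁) with hv
    have hv0 : 0 ≤ v := by rw [hv]; linarith
    have hstep' : dist (ρ.1.1 t₁) (τ.1.1 (t₂ + v)) ≤ dist (ρ.1.1 t₁) (τ.1.1 t₂) := by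
      apply le_of_sq_le_sq' dist_nonneg dist_nonneg
      nlinarith [hstep, sq_nonneg v]
    -- (t₁, t₂+v) is an aligned pair at s₁ := t₁ - A
    have hvval : t₂ + v = B + (t₁ - A) := by
      rw [hv, hlevρ, hlevτ]; ring
    obtain ⟨C, hC'⟩ := class_bound_shift ρ τ h₁ (show 0 ≤ t₂ + v by linarith)
    have hanti := ray_diag_antitone hC hG ρ.1.2 τ.1.2 h₁
      (show 0 ≤ t₂ + v by linarith) hC' 0 (le_refl 0) (s - (t₁ - A)) (by linarith)
    simp only [add_zero] at hanti
    have e1 : t₁ + (s - (t₁ - A)) = A + s := by ring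
    have e2 : t₂ + v + (s - (t₁ - A)) = B + s := by rw [hvval]; ring
    rw [e1, e2] at hanti
    exact le_trans hanti hstep'
  · -- τ-point deeper: move ρ
    have hlev : bus σ₀.1 (τ.1.1 t₂) ≤ bus σ₀.1 (ρ.1.1 t₁) := by
      rw [hlevρ, hlevτ]; exact hcase
    have hstep := align_pair hC hG hcpl σ₀ hσ₀ τ ρ h₂ h₁ hlev
    set v := bus σ₀.1 (ρ.1.1 t₁) - bus σ₀.1 (τ.1.1 t₂) with hv
    have hv0 : 0 ≤ v := by rw [hv]; linarith
    have hstep' : dist (τ.1.1 t₂) (ρ.1.1 (t₁ + v)) ≤ dist (τ.1.1 t₂) (ρ.1.1 t₁) := by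
      apply le_of_sq_le_sq' dist_nonneg dist_nonneg
      nlinarith [hstep, sq_nonneg v]
    have hvval : t₁ + v = A + (t₂ - B) := by
      rw [hv, hlevρ, hlevτ]; ring
    obtain ⟨C, hC'⟩ := class_bound_shift ρ τ (show 0 ≤ t₁ + v by linarith) h₂
    have hanti := ray_diag_antitone hC hG ρ.1.2 τ.1.2
      (show 0 ≤ t₁ + v by linarith) h₂ hC' 0 (le_refl 0) (s - (t₂ - B)) (by linarith)
    simp only [add_zero] at hanti
    have e1 : t₁ + v + (s - (t₂ - B)) = A + s := by rw [hvval]; ring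
    have e2 : t₂ + (s - (t₂ - B)) = B + s := by ring
    rw [e1, e2] at hanti
    have := dist_comm (τ.1.1 t₂) (ρ.1.1 t₁)
    have h' := dist_comm (τ.1.1 t₂) (ρ.1.1 (t₁+v))
    calc dist (ρ.1.1 (A + s)) (τ.1.1 (B + s)) ≤ dist (ρ.1.1 (t₁+v)) (τ.1.1 t₂) := hanti
    _ = dist (τ.1.1 t₂) (ρ.1.1 (t₁+v)) := (dist_comm _ _)
    _ ≤ dist (τ.1.1 t₂) (ρ.1.1 t₁) := hstep'
    _ = dist (ρ.1.1 t₁) (τ.1.1 t₂) := dist_comm _ _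

end ClassLevel

end CAT0Geo

namespace CAT0Geo

open Filter Topology

section Dxi

variable {X : Type u} [MetricSpace X] {ξ : IdealBoundary X}

instance : Nonempty {p : ℝ × ℝ // 0 ≤ p.1 ∧ 0 ≤ p.2} :=
  ⟨⟨(0, 0), le_refl 0, le_refl 0⟩⟩

/-- The asymptotic distance between two rays in the class. -/
noncomputable def dxi (ρ τ : raysTo ξ) : ℝ := asympDistRays ρ.1.1 τ.1.1

lemma dxi_bdd (ρ τ : raysTo ξ) :
    BddBelow (Set.range fun p : {p : ℝ × ℝ // 0 ≤ p.1 ∧ 0 ≤ p.2} =>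
      dist (ρ.1.1 p.1.1) (τ.1.1 p.1.2)) := by
  refine ⟨0, ?_⟩
  rintro y ⟨p, rfl⟩
  exact dist_nonneg

lemma dxi_le_pair (ρ τ : raysTo ξ) {t₁ t₂ : ℝ} (h₁ : 0 ≤ t₁) (h₂ : 0 ≤ t₂) :
    dxi ρ τ ≤ dist (ρ.1.1 t₁) (τ.1.1 t₂) :=
  ciInf_le (dxi_bdd ρ τ) ⟨(t₁, t₂), h₁, h₂⟩

lemma dxi_nonneg (ρ τ : raysTo ξ) : 0 ≤ dxi ρ τ :=
  le_ciInf fun p => dist_nonneg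

lemma exists_pair_lt (ρ τ : raysTo ξ) {ε : ℝ} (hε : 0 < ε) :
    ∃ t₁ t₂, 0 ≤ t₁ ∧ 0 ≤ t₂ ∧ dist (ρ.1.1 t₁) (τ.1.1 t₂) < dxi ρ τ + ε := by
  have h : dxi ρ τ < dxi ρ τ + ε := by linarith
  obtain ⟨p, hp⟩ := exists_lt_of_ciInf_lt h
  exact ⟨p.1.1, p.1.2, p.2.1, p.2.2, hp⟩

lemma dxi_self (ρ : raysTo ξ) : dxi ρ ρ = 0 := by
  apply le_antisymm
  · have := dxi_le_pair ρ ρ (le_refl 0) (le_refl 0)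
    simpa using this
  · exact dxi_nonneg ρ ρ

lemma dxi_comm (ρ τ : raysTo ξ) : dxi ρ τ = dxi τ ρ := by
  have h : ∀ (a b : raysTo ξ), dxi a b ≤ dxi b a := by
    intro a b
    apply le_ciInf
    rintro ⟨⟨t₁, t₂⟩, h₁, h₂⟩
    simp only
    rw [dist_comm]
    exact dxi_le_pair a b h₂ h₁
  exact le_antisymm (h ρ τ) (h τ ρ)

/-- Eventually, aligned pairs realize the asymptotic distance. -/
lemma aligned_eventually (hC : CAT0 X) (hG : GeodesicSpace X) (hcpl : CompleteSpace X)
    (σ₀ : Rays X) (hσ₀ : rayClass σ₀ = ξ) (ρ τ : raysTo ξ) {ε : ℝ} (hε : 0 < ε) :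
    ∃ S : ℝ, ∀ s, S ≤ s → 0 ≤ albase σ₀ ρ + s ∧ 0 ≤ albase σ₀ τ + s ∧
      dist (ρ.1.1 (albase σ₀ ρ + s)) (τ.1.1 (albase σ₀ τ + s)) ≤ dxi ρ τ + ε := by
  obtain ⟨t₁, t₂, h₁, h₂, hd⟩ := exists_pair_lt ρ τ hε
  refine ⟨max (max (t₁ - albase σ₀ ρ) (t₂ - albase σ₀ τ))
    (max (-albase σ₀ ρ) (-albase σ₀ τ)), fun s hs => ?_⟩
  have e₁ : t₁ - albase σ₀ ρ ≤ s :=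
    le_trans (le_trans (le_max_left _ _) (le_max_left _ _)) hs
  have e₂ : t₂ - albase σ₀ τ ≤ s :=
    le_trans (le_trans (le_max_right _ _) (le_max_left _ _)) hs
  have e₃ : -albase σ₀ ρ ≤ s :=
    le_trans (le_trans (le_max_left _ _) (le_max_right _ _)) hs
  have e₄ : -albase σ₀ τ ≤ s :=
    le_trans (le_trans (le_max_right _ _) (le_max_right _ _)) hs
  refine ⟨by linarith, by linarith, ?_⟩
  have := aligned_le_pair hC hG hcpl σ₀ hσ₀ ρ τ h₁ h₂ e₁ e₂
  linarith

lemma dxi_triangle (hC : CAT0 X) (hG : GeodesicSpace X) (hcpl : CompleteSpace X)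
    (σ₀ : Rays X) (hσ₀ : rayClass σ₀ = ξ) (ρ τ ζ : raysTo ξ) :
    dxi ρ ζ ≤ dxi ρ τ + dxi τ ζ := by
  apply le_of_forall_pos_le_add
  intro ε hε
  obtain ⟨S₁, hS₁⟩ := aligned_eventually hC hG hcpl σ₀ hσ₀ ρ τ (half_pos hε)
  obtain ⟨S₂, hS₂⟩ := aligned_eventually hC hG hcpl σ₀ hσ₀ τ ζ (half_pos hε)
  set s := max S₁ S₂
  obtain ⟨p₁, p₂, d₁⟩ := hS₁ s (le_max_left _ _)
  obtain ⟨q₁, q₂, d₂⟩ := hS₂ s (le_max_right _ _)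
  have h1 : dxi ρ ζ ≤ dist (ρ.1.1 (albase σ₀ ρ + s)) (ζ.1.1 (albase σ₀ ζ + s)) :=
    dxi_le_pair ρ ζ p₁ q₂
  have h2 := dist_triangle (ρ.1.1 (albase σ₀ ρ + s)) (τ.1.1 (albase σ₀ τ + s))
    (ζ.1.1 (albase σ₀ ζ + s))
  linarith

end Dxi

end CAT0Geo

namespace CAT0Geo

open Filter Topology

section MidSeq

variable {X : Type u} [MetricSpace X] {ξ : IdealBoundary X}

set_option maxHeartbeats 1000000 in
/-- Approximate midpoints between classes of rays, satisfying the CN-inequality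
against every other class in the limit. -/
lemma mid_seq (hC : CAT0 X) (hG : GeodesicSpace X) (hcpl : CompleteSpace X)
    (σ₀ : Rays X) (hσ₀ : rayClass σ₀ = ξ) (ρ τ : raysTo ξ) :
    ∃ ms : ℕ → raysTo ξ,
      (∀ n : ℕ, dxi ρ (ms n) ≤ dxi ρ τ / 2 + 1/(n+1) ∧
        dxi (ms n) τ ≤ dxi ρ τ / 2 + 1/(n+1)) ∧
      (∀ w : raysTo ξ, ∀ δ : ℝ, 0 < δ → ∀ᶠ n : ℕ in atTop,
        dxi w (ms n)^2 ≤ (dxi w ρ^2 + dxi w τ^2)/2 - dxi ρ τ^2/4 + δ) := by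
  choose Sf hSf using fun n : ℕ =>
    aligned_eventually hC hG hcpl σ₀ hσ₀ ρ τ
      (show (0:ℝ) < 1/(n+1) by positivity)
  set sn : ℕ → ℝ := fun n => max (Sf n) n with hsn
  set Y : ℕ → X := fun n => ρ.1.1 (albase σ₀ ρ + sn n) with hY
  set Z : ℕ → X := fun n => τ.1.1 (albase σ₀ τ + sn n) with hZ
  have hspec : ∀ n : ℕ, 0 ≤ albase σ₀ ρ + sn n ∧ 0 ≤ albase σ₀ τ + sn n ∧
      dist (Y n) (Z n) ≤ dxi ρ τ + 1/(n+1) := fun n =>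
    hSf n (sn n) (le_max_left _ _)
  choose mhat hmhat using fun n : ℕ => exists_midpt hG (Y n) (Z n)
  set ms : ℕ → raysTo ξ := fun n =>
    ⟨⟨coray hG σ₀.1 (mhat n), coray_ray hC hG hcpl σ₀.2 (mhat n)⟩,
      coray_class hC hG hcpl σ₀ hσ₀ (mhat n)⟩ with hms
  have hms0 : ∀ n, (ms n).1.1 0 = mhat n := fun n =>
    coray_zero hC hG hcpl σ₀.2 (mhat n)
  have hYZD : ∀ n, dxi ρ τ ≤ dist (Y n) (Z n) := fun n =>
    dxi_le_pair ρ τ (hspec n).1 (hspec n).2.1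
  refine ⟨ms, ?_, ?_⟩
  · intro n
    have h1 : dxi ρ (ms n) ≤ dist (Y n) (mhat n) := by
      have := dxi_le_pair ρ (ms n) (hspec n).1 (le_refl 0)
      rwa [hms0 n] at this
    have h2 : dxi (ms n) τ ≤ dist (mhat n) (Z n) := by
      have := dxi_le_pair (ms n) τ (le_refl 0) (hspec n).2.1
      rwa [hms0 n] at this
    obtain ⟨hm1, hm2⟩ := hmhat n
    have hd := (hspec n).2.2
    have hn1 : (0:ℝ) < 1/(n+1) := by positivity
    constructor
    · rw [hm1] at h1
      linarith
    · rw [hm2] at h2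
      linarith
  · intro w δ hδ
    set a := dxi w ρ with ha
    set b := dxi w τ with hb
    have ha0 : 0 ≤ a := dxi_nonneg w ρ
    have hb0 : 0 ≤ b := dxi_nonneg w τ
    set δ' := min 1 (δ/(2*a+2*b+2)) with hδ'
    have hδ'0 : 0 < δ' := lt_min one_pos (by positivity)
    have hδ'1 : δ' ≤ 1 := min_le_left _ _
    have hδ'2 : δ'*(2*a+2*b+2) ≤ δ := by
      have h := min_le_right 1 (δ/(2*a+2*b+2))
      have hpos : (0:ℝ) < 2*a+2*b+2 := by linarith
      calc δ'*(2*a+2*b+2) ≤ (δ/(2*a+2*b+2))*(2*a+2*b+2) := by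
            apply mul_le_mul_of_nonneg_right h (le_of_lt hpos)
      _ = δ := div_mul_cancel₀ _ (ne_of_gt hpos)
    obtain ⟨S₁, hS₁⟩ := aligned_eventually hC hG hcpl σ₀ hσ₀ w ρ hδ'0
    obtain ⟨S₂, hS₂⟩ := aligned_eventually hC hG hcpl σ₀ hσ₀ w τ hδ'0
    obtain ⟨N, hN⟩ := exists_nat_ge (max (max S₁ S₂) (-albase σ₀ w))
    filter_upwards [eventually_ge_atTop N] with n hn
    have hsnn : (n:ℝ) ≤ sn n := le_max_right _ _
    have hNn : max (max S₁ S₂) (-albase σ₀ w) ≤ sn n := by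
      calc max (max S₁ S₂) (-albase σ₀ w) ≤ (N:ℝ) := hN
      _ ≤ (n:ℝ) := by exact_mod_cast hn
      _ ≤ sn n := hsnn
    have hS₁n : S₁ ≤ sn n :=
      le_trans (le_trans (le_max_left _ _) (le_max_left _ _)) hNn
    have hS₂n : S₂ ≤ sn n :=
      le_trans (le_trans (le_max_right _ _) (le_max_left _ _)) hNn
    obtain ⟨hw0, hρ0, hwY⟩ := hS₁ (sn n) hS₁n
    obtain ⟨-, hτ0, hwZ⟩ := hS₂ (sn n) hS₂n
    set W := w.1.1 (albase σ₀ w + sn n) with hW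
    obtain ⟨hm1, hm2⟩ := hmhat n
    have hcn := hC W (Y n) (Z n) (mhat n) hm1 hm2
    have hdw : dxi w (ms n) ≤ dist W (mhat n) := by
      have := dxi_le_pair w (ms n) hw0 (le_refl 0)
      rwa [hms0 n] at this
    have hdw2 : dxi w (ms n)^2 ≤ dist W (mhat n)^2 := by
      have h0 := dxi_nonneg w (ms n)
      nlinarith
    have hYZ := hYZD n
    have hD0 : 0 ≤ dxi ρ τ := dxi_nonneg ρ τ
    have hWY : dist W (Y n) ≤ a + δ' := hwY
    have hWZ : dist W (Z n) ≤ b + δ' := hwZ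
    have hWY0 : 0 ≤ dist W (Y n) := dist_nonneg
    have hWZ0 : 0 ≤ dist W (Z n) := dist_nonneg
    nlinarith [hcn, hdw2, hYZ, hD0, hWY, hWZ, hWY0, hWZ0, hδ'2, hδ'1, hδ'0, ha0, hb0]

end MidSeq

end CAT0Geo

namespace CAT0Geo

open Filter Topology

section Dyadic

variable {Y : Type v} [MetricSpace Y]

/-- Dyadic subdivision points between `p` and `q` via a midpoint map. -/
noncomputable def dyadic (mid : Y → Y → Y) (p q : Y) : ℕ → ℕ → Y
  | 0 => fun k => if k = 0 then p else q
  | (n+1) => fun k =>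
      if k % 2 = 0 then dyadic mid p q n (k/2)
      else mid (dyadic mid p q n (k/2)) (dyadic mid p q n (k/2+1))

variable (mid : Y → Y → Y) (p q : Y)

lemma dyadic_zero : ∀ n, dyadic mid p q n 0 = p := by
  intro n
  induction n with
  | zero => simp [dyadic]
  | succ n ih => simp [dyadic, ih]

lemma dyadic_top : ∀ n, dyadic mid p q n (2^n) = q := by
  intro n
  induction n with
  | zero => simp [dyadic]
  | succ n ih =>
    have h2n : (2:ℕ)^(n+1) = 2*2^n := by ring
    have h1 : 2^(n+1) % 2 = 0 := by omega
    have h2 : 2^(n+1) / 2 = 2^n := by omega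
    simp [dyadic, h1, h2, ih]

variable (hm : ∀ a b : Y, dist a (mid a b) = dist a b / 2 ∧ dist (mid a b) b = dist a b / 2)

include hm in
lemma dyadic_adj : ∀ n k, k < 2^n →
    dist (dyadic mid p q n k) (dyadic mid p q n (k+1)) = dist p q / 2^n := by
  intro n
  induction n with
  | zero =>
    intro k hk
    interval_cases k
    simp [dyadic]
  | succ n ih =>
    intro k hk
    have h2 : (2:ℕ)^(n+1) = 2*2^n := by ring
    rcases Nat.even_or_odd k with ⟨j, hj⟩ | ⟨j, hj⟩
    · subst hj
      have hj' : j < 2^n := by omega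
      have e1 : (j + j) % 2 = 0 := by omega
      have e2 : (j + j) / 2 = j := by omega
      have e3 : (j + j + 1) % 2 = 1 := by omega
      have e4 : (j + j + 1) / 2 = j := by omega
      have hmid := (hm (dyadic mid p q n j) (dyadic mid p q n (j+1))).1
      have := ih j hj'
      simp only [dyadic, e1, e2, e3, e4]
      norm_num
      rw [hmid, this]
      rw [pow_succ]
      ring
    · subst hj
      have hj' : j + 1 < 2^n ∨ j + 1 = 2^n := by omega
      have hj'' : j + 1 ≤ 2^n := by omega
      have hjlt : j < 2^n := by omega
      have e1 : (2*j + 1) % 2 = 1 := by omega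
      have e2 : (2*j + 1) / 2 = j := by omega
      have e3 : (2*j + 1 + 1) % 2 = 0 := by omega
      have e4 : (2*j + 1 + 1) / 2 = j + 1 := by omega
      have hmid := (hm (dyadic mid p q n j) (dyadic mid p q n (j+1))).2
      have := ih j hjlt
      simp only [dyadic, e1, e2, e3, e4]
      norm_num
      rw [hmid, this]
      rw [pow_succ]
      ring

include hm in
lemma dyadic_chain : ∀ n d k, k + d ≤ 2^n →
    dist (dyadic mid p q n k) (dyadic mid p q n (k+d)) ≤ d * (dist p q / 2^n) := by
  intro n d
  induction d with
  | zero =>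
    intro k hk
    simp
  | succ d ih =>
    intro k hk
    have h1 := ih k (by omega)
    have h2 := dyadic_adj mid p q hm n (k+d) (by omega)
    have htri := dist_triangle (dyadic mid p q n k) (dyadic mid p q n (k+d))
      (dyadic mid p q n (k+d+1))
    have e : k + (d+1) = (k + d) + 1 := by omega
    rw [e]
    push_cast
    calc dist (dyadic mid p q n k) (dyadic mid p q n (k+d+1))
        ≤ dist (dyadic mid p q n k) (dyadic mid p q n (k+d)) +
          dist (dyadic mid p q n (k+d)) (dyadic mid p q n (k+d+1)) := htri
    _ ≤ d * (dist p q / 2^n) + dist p q / 2^n := by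
        rw [h2]
        exact add_le_add_left h1 _
    _ = ((d:ℝ) + 1) * (dist p q / 2^n) := by ring

include hm in
lemma dyadic_exact : ∀ n k d, k + d ≤ 2^n →
    dist (dyadic mid p q n k) (dyadic mid p q n (k+d)) = d * (dist p q / 2^n) := by
  intro n k d hkd
  have hup := dyadic_chain mid p q hm n d k hkd
  -- lower bound by the squeeze
  set r : ℕ := 2^n - (k + d) with hr
  have h1 : dist p q = dist (dyadic mid p q n 0) (dyadic mid p q n (2^n)) := by
    rw [dyadic_zero, dyadic_top]
  have h2 : dist (dyadic mid p q n 0) (dyadic mid p q n (0+k)) ≤ k * (dist p q / 2^n) :=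
    dyadic_chain mid p q hm n k 0 (by omega)
  have h3 : dist (dyadic mid p q n (k+d)) (dyadic mid p q n ((k+d)+r)) ≤
      r * (dist p q / 2^n) := dyadic_chain mid p q hm n r (k+d) (by omega)
  have h4 : (k+d) + r = 2^n := by omega
  rw [h4] at h3
  have h5 : (0:ℕ) + k = k := by omega
  rw [h5] at h2
  have htri := dist_triangle4 (dyadic mid p q n 0) (dyadic mid p q n k)
    (dyadic mid p q n (k+d)) (dyadic mid p q n (2^n))
  rw [← h1] at htri
  have hsum : (k:ℝ) * (dist p q / 2^n) + d * (dist p q / 2^n) + r * (dist p q / 2^n)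
      = dist p q := by
    have hc : (k:ℝ) + d + r = 2^n := by
      have h' : ((k + d + r : ℕ) : ℝ) = ((2^n : ℕ) : ℝ) := by rw [show k+d+r = 2^n by omega]
      push_cast at h'
      linarith
    calc (k:ℝ) * (dist p q / 2^n) + d * (dist p q / 2^n) + r * (dist p q / 2^n)
        = ((k:ℝ) + d + r) * (dist p q / 2^n) := by ring
    _ = 2^n * (dist p q / 2^n) := by rw [hc]
    _ = dist p q := by field_simp
  linarith

lemma dyadic_lift : ∀ n k, dyadic mid p q (n+1) (2*k) = dyadic mid p q n k := by
  intro n k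
  have e1 : (2*k) % 2 = 0 := by omega
  have e2 : (2*k) / 2 = k := by omega
  simp [dyadic, e1, e2]

lemma dyadic_lifts : ∀ j n k, dyadic mid p q (n+j) (k * 2^j) = dyadic mid p q n k := by
  intro j
  induction j with
  | zero => intro n k; simp
  | succ j ih =>
    intro n k
    have e : k * 2^(j+1) = 2*(k * 2^j) := by ring
    rw [e]
    have := dyadic_lift mid p q (n+j) (k * 2^j)
    rw [show n + (j+1) = (n+j)+1 by omega, this, ih]

end Dyadic

end CAT0Geo

namespace CAT0Geo

open Filter Topology

section GeoOfMid

variable {Y : Type v} [MetricSpace Y]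

set_option maxHeartbeats 1000000 in
theorem geodesic_of_midpoints (hcpl : CompleteSpace Y) (mid : Y → Y → Y)
    (hm : ∀ a b : Y, dist a (mid a b) = dist a b / 2 ∧ dist (mid a b) b = dist a b / 2) :
    GeodesicSpace Y := by
  intro p q
  haveI := hcpl
  haveI : Nonempty Y := ⟨p⟩
  rcases eq_or_lt_of_le (dist_nonneg : (0:ℝ) ≤ dist p q) with h0 | hD
  · have hpq : p = q := eq_of_dist_eq_zero h0.symm
    refine ⟨fun _ => p, ?_, rfl, hpq⟩
    intro t₁ ht₁ t₂ ht₂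
    rw [← h0] at ht₁ ht₂
    have h1 : t₁ = 0 := le_antisymm ht₁.2 ht₁.1
    have h2 : t₂ = 0 := le_antisymm ht₂.2 ht₂.1
    subst h1; subst h2
    simp
  · set D := dist p q with hDdef
    set f := dyadic mid p q with hf
    set K : ℕ → ℝ → ℕ := fun n t => ⌊t * 2^n / D⌋₊ with hK
    have hKle : ∀ (n : ℕ) (t : ℝ), t ≤ D → K n t ≤ 2^n := by
      intro n t ht
      have h1 : t * 2^n / D ≤ 2^n := by
        rw [div_le_iff₀ hD]
        have h2 : (0:ℝ) < 2^n := by positivity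
        nlinarith
      calc K n t ≤ ⌊((2^n : ℕ) : ℝ)⌋₊ := Nat.floor_le_floor (by push_cast; exact h1)
      _ = 2^n := Nat.floor_natCast _
    have hKapprox : ∀ (n : ℕ) (t : ℝ), 0 ≤ t →
        (K n t : ℝ) * (D/2^n) ≤ t ∧ t < (K n t + 1) * (D/2^n) := by
      intro n t ht
      have hpow : (0:ℝ) < 2^n := by positivity
      have h1 : (K n t : ℝ) ≤ t * 2^n / D := Nat.floor_le (by positivity)
      have h2 : t * 2^n / D < K n t + 1 := Nat.lt_floor_add_one _
      constructor
      · calc (K n t : ℝ) * (D/2^n) ≤ (t * 2^n / D) * (D / 2^n) := by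
              apply mul_le_mul_of_nonneg_right h1 (by positivity)
        _ = t := by field_simp
      · have h4 := mul_lt_mul_of_pos_right h2 (show (0:ℝ) < D/2^n by positivity)
        have h5 : (t * 2^n / D) * (D/2^n) = t := by field_simp
        rw [h5] at h4
        exact h4
    have hcross : ∀ (t : ℝ), 0 ≤ t → t ≤ D → ∀ n j : ℕ,
        dist (f n (K n t)) (f (n+j) (K (n+j) t)) ≤ D/2^n := by
      intro t ht htD n j
      have h1 : f n (K n t) = f (n+j) (K n t * 2^j) := (dyadic_lifts mid p q j n (K n t)).symm
      rw [h1]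
      have hpj : (0:ℝ) < 2^j := by positivity
      have hpn : (0:ℝ) < 2^n := by positivity
      have hfl1 : K n t * 2^j ≤ K (n+j) t := by
        apply Nat.le_floor
        push_cast
        have hfloor : (K n t : ℝ) ≤ t * 2^n / D := Nat.floor_le (by positivity)
        calc (K n t : ℝ) * 2^j ≤ (t * 2^n / D) * 2^j := by
              apply mul_le_mul_of_nonneg_right hfloor (by positivity)
        _ = t * 2^(n+j) / D := by rw [pow_add]; ring
      have hfl2 : K (n+j) t < (K n t + 1) * 2^j := by
        have h2' : t * 2^n / D < K n t + 1 := Nat.lt_floor_add_one _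
        have h3 : t * 2^(n+j) / D < ((K n t + 1) * 2^j : ℕ) := by
          push_cast
          calc t * 2^(n+j)/D = (t * 2^n/D) * 2^j := by rw [pow_add]; ring
          _ < ((K n t : ℝ) + 1) * 2^j := by
              apply mul_lt_mul_of_pos_right h2' hpj
        exact Nat.floor_lt (by positivity) |>.2 h3
      set d := K (n+j) t - K n t * 2^j with hd
      have hdd : K (n+j) t = K n t * 2^j + d := by omega
      rw [hdd]
      have hle2 : K n t * 2^j + d ≤ 2^(n+j) := by
        rw [← hdd]
        exact hKle (n+j) t htD
      have hex := dyadic_exact mid p q hm (n+j) (K n t * 2^j) d hle2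
      rw [hex]
      have hexp : (K n t + 1)*2^j = K n t * 2^j + 2^j := by ring
      have hdlt : d < 2^j := by omega
      have hdr : (d:ℝ) ≤ 2^j := by
        have : (d:ℝ) < ((2^j : ℕ):ℝ) := by exact_mod_cast hdlt
        push_cast at this
        linarith
      calc (d:ℝ) * (D/2^(n+j)) ≤ 2^j * (D/2^(n+j)) := by
            apply mul_le_mul_of_nonneg_right hdr (by positivity)
      _ = D/2^n := by
          rw [pow_add]
          field_simp
    -- clamping
    set cl : ℝ → ℝ := fun t => max 0 (min t D) with hcl
    have hcl0 : ∀ t, 0 ≤ cl t := fun t => le_max_left _ _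
    have hclD : ∀ t, cl t ≤ D := by
      intro t
      apply max_le (le_of_lt hD)
      exact min_le_right _ _
    have hclid : ∀ t, 0 ≤ t → t ≤ D → cl t = t := by
      intro t h1 h2
      rw [hcl]
      simp only
      rw [min_eq_left h2, max_eq_right h1]
    set g : ℝ → ℕ → Y := fun t n => f n (K n (cl t)) with hg
    have hpow0 : Tendsto (fun n : ℕ => D/2^n) atTop (𝓝 0) := by
      have h2 : (fun n : ℕ => D/2^n) = fun n : ℕ => D * (1/2)^n := by
        funext n; rw [div_pow]; ring
      rw [h2]
      simpa using (tendsto_pow_atTop_nhds_zero_of_lt_one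
        (by norm_num : (0:ℝ) ≤ 1/2) (by norm_num : (1:ℝ)/2 < 1)).const_mul D
    have hgcauchy : ∀ t, CauchySeq (g t) := by
      intro t
      rw [Metric.cauchySeq_iff]
      intro ε hε
      obtain ⟨N, hN⟩ := (Metric.tendsto_atTop.1 hpow0) ε hε
      refine ⟨N, ?_⟩
      have key : ∀ m n, N ≤ m → n ≥ m → dist (g t m) (g t n) < ε := by
        intro m n hmN hnm
        obtain ⟨j, rfl⟩ := Nat.exists_eq_add_of_le hnm
        have h1 := hcross (cl t) (hcl0 t) (hclD t) m j
        have h2 := hN m hmN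
        rw [Real.dist_eq, sub_zero, abs_of_nonneg (by positivity)] at h2
        calc dist (g t m) (g t (m+j)) ≤ D/2^m := h1
        _ < ε := h2
      intro m hm n hn
      rcases le_total m n with h | h
      · exact key m n hm h
      · rw [dist_comm]
        exact key n m hn h
    set γ : ℝ → Y := fun t => limUnder atTop (g t) with hγdef
    have hγ : ∀ t, Tendsto (g t) atTop (𝓝 (γ t)) := by
      intro t
      obtain ⟨y, hy⟩ := cauchySeq_tendsto_of_complete (hgcauchy t)
      rw [hγdef]
      simp only
      rw [hy.limUnder_eq]
      exact hy
    -- distance formula for ordered parameters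
    have hdist : ∀ t t', 0 ≤ t → t ≤ t' → t' ≤ D → dist (γ t) (γ t') = t' - t := by
      intro t t' ht htt' ht'D
      have htD : t ≤ D := le_trans htt' ht'D
      have ht'0 : 0 ≤ t' := le_trans ht htt'
      have hcl1 : cl t = t := hclid t ht htD
      have hcl2 : cl t' = t' := hclid t' ht'0 ht'D
      have hseq : Tendsto (fun n => dist (g t n) (g t' n)) atTop (𝓝 (dist (γ t) (γ t'))) :=
        (hγ t).dist (hγ t')
      have hval : ∀ n : ℕ, t' - t - 2*(D/2^n) ≤ dist (g t n) (g t' n) ∧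
          dist (g t n) (g t' n) ≤ t' - t + 2*(D/2^n) := by
        intro n
        have hmono : K n t ≤ K n t' := by
          apply Nat.floor_le_floor
          have hpn : (0:ℝ) < 2^n := by positivity
          exact (div_le_div_iff_of_pos_right hD).2 (by nlinarith)
        set d := K n t' - K n t with hd
        have hdd : K n t' = K n t + d := by omega
        have hle2' : K n t + d ≤ 2^n := by
          rw [← hdd]
          exact hKle n t' ht'D
        have hex := dyadic_exact mid p q hm n (K n t) d hle2'
        have hgg : dist (g t n) (g t' n) = (d:ℝ) * (D/2^n) := by
          rw [hg]
          simp only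
          rw [hcl1, hcl2, hdd]
          exact hex
        have ha1 := hKapprox n t ht
        have ha2 := hKapprox n t' ht'0
        have hcast : (d:ℝ) = (K n t' : ℝ) - K n t := by
          rw [hd]
          push_cast [Nat.cast_sub hmono]
          ring
        have hdpos : (0:ℝ) < D/2^n := by positivity
        constructor
        · rw [hgg, hcast]
          nlinarith [ha1.1, ha1.2, ha2.1, ha2.2]
        · rw [hgg, hcast]
          nlinarith [ha1.1, ha1.2, ha2.1, ha2.2]
      have hlim2 : Tendsto (fun n => dist (g t n) (g t' n)) atTop (𝓝 (t' - t)) := by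
        apply tendsto_of_tendsto_of_tendsto_of_le_of_le
          (g := fun n : ℕ => t' - t - 2*(D/2^n)) (h := fun n : ℕ => t' - t + 2*(D/2^n))
        · simpa using (tendsto_const_nhds (x := t'-t)).sub ((hpow0.const_mul 2))
        · simpa using (tendsto_const_nhds (x := t'-t)).add ((hpow0.const_mul 2))
        · exact fun n => (hval n).1
        · exact fun n => (hval n).2
      exact tendsto_nhds_unique hseq hlim2
    -- endpoints
    have hγ0 : γ 0 = p := by
      have hc : cl 0 = 0 := hclid 0 (le_refl 0) (le_of_lt hD)
      have hgconst : g 0 = fun _ : ℕ => p := by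
        funext n
        rw [hg]
        simp only
        rw [hc]
        have : K n 0 = 0 := by
          rw [hK]
          simp
        rw [this]
        exact dyadic_zero mid p q n
      have := hγ 0
      rw [hgconst] at this
      exact tendsto_nhds_unique this tendsto_const_nhds
    have hγD : γ D = q := by
      have hc : cl D = D := hclid D (le_of_lt hD) (le_refl D)
      have hgconst : g D = fun _ : ℕ => q := by
        funext n
        rw [hg]
        simp only
        rw [hc]
        have : K n D = 2^n := by
          rw [hK]
          simp only
          have : D * 2^n / D = 2^n := by field_simp
          rw [this]
          rw [show ((2:ℝ)^n) = ((2^n : ℕ) : ℝ) by push_cast; ring]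
          exact Nat.floor_natCast _
        rw [this]
        exact dyadic_top mid p q n
      have := hγ D
      rw [hgconst] at this
      exact tendsto_nhds_unique this tendsto_const_nhds
    refine ⟨γ, ?_, hγ0, hγD⟩
    intro t₁ ht₁ t₂ ht₂
    rcases le_total t₁ t₂ with h | h
    · rw [hdist t₁ t₂ ht₁.1 h ht₂.2]
      rw [abs_of_nonpos (by linarith)]
      ring
    · rw [dist_comm, hdist t₂ t₁ ht₂.1 h ht₁.2]
      rw [abs_of_nonneg (by linarith)]

end GeoOfMid

end CAT0Geo

namespace CAT0Geo

open Filter Topology UniformSpace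

section CompletionCAT0

variable {α : Type u} [PseudoMetricSpace α]

/-- Approximate midpoints satisfying the CN-inequality asymptotically. -/
def MidHyp (α : Type u) [PseudoMetricSpace α] : Prop :=
  ∀ p q : α, ∃ ms : ℕ → α,
    (∀ n : ℕ, dist p (ms n) ≤ dist p q / 2 + 1/(n+1) ∧
      dist (ms n) q ≤ dist p q / 2 + 1/(n+1)) ∧
    (∀ w : α, ∀ δ : ℝ, 0 < δ → ∀ᶠ n : ℕ in atTop,
      dist w (ms n)^2 ≤ (dist w p^2 + dist w q^2)/2 - dist p q^2/4 + δ)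

set_option maxHeartbeats 1000000 in
lemma completion_mid_coe (h : MidHyp α) (p q : α) :
    ∃ m : Completion α, dist (p : Completion α) m = dist p q / 2 ∧
      dist m (q : Completion α) = dist p q / 2 ∧
      ∀ w : Completion α,
        dist w m^2 ≤ (dist w (p : Completion α)^2 + dist w (q : Completion α)^2)/2
          - dist (p : Completion α) (q : Completion α)^2/4 := by
  obtain ⟨ms, hms1, hms2⟩ := h p q
  set D := dist p q with hD
  have hD0 : 0 ≤ D := dist_nonneg
  have hone : Tendsto (fun n : ℕ => 1/((n:ℝ)+1)) atTop (𝓝 0) :=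
    tendsto_one_div_add_atTop_nhds_zero_nat
  have hcauchy : CauchySeq (fun n => (ms n : Completion α)) := by
    rw [Metric.cauchySeq_iff]
    intro ε hε
    have hbk : Tendsto (fun k : ℕ => D*(1/((k:ℝ)+1)) + (1/((k:ℝ)+1))^2 + 1/((k:ℝ)+1))
        atTop (𝓝 0) := by
      have h2 := ((hone.const_mul D).add (hone.pow 2)).add hone
      simpa using h2
    obtain ⟨k, hk⟩ := (Metric.tendsto_atTop.1 hbk) ((ε/2)^2) (by positivity)
    have hbk' : D*(1/((k:ℝ)+1)) + (1/((k:ℝ)+1))^2 + 1/((k:ℝ)+1) < (ε/2)^2 := by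
      have := hk k (le_refl k)
      rw [Real.dist_eq, sub_zero] at this
      have hnn : (0:ℝ) ≤ D*(1/((k:ℝ)+1)) + (1/((k:ℝ)+1))^2 + 1/((k:ℝ)+1) := by positivity
      rwa [abs_of_nonneg hnn] at this
    obtain ⟨N, hN⟩ := (hms2 (ms k) (1/((k:ℝ)+1)) (by positivity)).exists_forall_of_atTop
    refine ⟨N, ?_⟩
    have key : ∀ n, N ≤ n → dist (ms k) (ms n) < ε/2 := by
      intro n hn
      have h1 := hN n hn
      have h2 := (hms1 k).1
      have h3 := (hms1 k).2
      have h4 : dist (ms k) p = dist p (ms k) := dist_comm _ _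
      have hd1 : 0 ≤ dist (ms k) p := dist_nonneg
      have hd2 : 0 ≤ dist (ms k) q := dist_nonneg
      have hsq : dist (ms k) (ms n)^2 < (ε/2)^2 := by
        have hek : (0:ℝ) < 1/((k:ℝ)+1) := by positivity
        nlinarith [h1, h2, h3, hd1, hd2, hbk']
      nlinarith [dist_nonneg (x := ms k) (y := ms n), hε]
    intro m hm n hn
    rw [Completion.dist_eq]
    calc dist (ms m) (ms n) ≤ dist (ms k) (ms m) + dist (ms k) (ms n) :=
      dist_triangle_left _ _ _
    _ < ε/2 + ε/2 := add_lt_add (key m hm) (key n hn)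
    _ = ε := by ring
  obtain ⟨m, hm⟩ := cauchySeq_tendsto_of_complete hcauchy
  have hptend : Tendsto (fun n => dist (p : Completion α) ((ms n : α) : Completion α))
      atTop (𝓝 (dist (p : Completion α) m)) := tendsto_const_nhds.dist hm
  have hqtend : Tendsto (fun n => dist ((ms n : α) : Completion α) (q : Completion α))
      atTop (𝓝 (dist m (q : Completion α))) := hm.dist tendsto_const_nhds
  have hDhalf : Tendsto (fun n : ℕ => D/2 + 1/((n:ℝ)+1)) atTop (𝓝 (D/2)) := by
    simpa using (tendsto_const_nhds (x := D/2) (f := atTop)).add hone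
  have hple : dist (p : Completion α) m ≤ D/2 := by
    apply le_of_tendsto_of_tendsto hptend hDhalf
    filter_upwards with n
    rw [Completion.dist_eq]
    exact (hms1 n).1
  have hqle : dist m (q : Completion α) ≤ D/2 := by
    apply le_of_tendsto_of_tendsto hqtend hDhalf
    filter_upwards with n
    rw [Completion.dist_eq]
    exact (hms1 n).2
  have hlow : D ≤ dist (p : Completion α) m + dist m (q : Completion α) := by
    have := dist_triangle (p : Completion α) m (q : Completion α)
    rwa [Completion.dist_eq] at this
  have hpe : dist (p : Completion α) m = D/2 := by linarith
  have hqe : dist m (q : Completion α) = D/2 := by linarith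
  refine ⟨m, hpe, hqe, ?_⟩
  have hcoe : ∀ w : α, dist ((w:α) : Completion α) m^2
      ≤ (dist ((w:α) : Completion α) (p : Completion α)^2
        + dist ((w:α) : Completion α) (q : Completion α)^2)/2
        - dist (p : Completion α) (q : Completion α)^2/4 := by
    intro w
    apply le_of_forall_pos_le_add
    intro δ hδ
    have hwt : Tendsto (fun n => dist ((w:α) : Completion α) ((ms n : α) : Completion α)^2)
        atTop (𝓝 (dist ((w:α) : Completion α) m^2)) :=
      (tendsto_const_nhds.dist hm).pow 2
    apply le_of_tendsto_of_tendsto hwt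
      (tendsto_const_nhds (x := (dist ((w:α) : Completion α) (p : Completion α)^2
        + dist ((w:α) : Completion α) (q : Completion α)^2)/2
        - dist (p : Completion α) (q : Completion α)^2/4 + δ) (f := atTop))
    filter_upwards [hms2 w δ hδ] with n hn
    simp only [Completion.dist_eq]
    exact hn
  intro w
  induction w using Completion.induction_on with
  | hp =>
    apply isClosed_le
    · exact (Completion.continuous_dist continuous_id continuous_const).pow 2
    · apply Continuous.sub
      · apply Continuous.div_const
        apply Continuous.add
        · exact (Completion.continuous_dist continuous_id continuous_const).pow 2
        · exact (Completion.continuous_dist continuous_id continuous_const).pow 2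
      · exact continuous_const
  | ih w => exact hcoe w

set_option maxHeartbeats 1000000 in
lemma completion_mid (h : MidHyp α) (p q : Completion α) :
    ∃ m : Completion α, dist p m = dist p q / 2 ∧ dist m q = dist p q / 2 ∧
      ∀ w : Completion α, dist w m^2 ≤ (dist w p^2 + dist w q^2)/2 - dist p q^2/4 := by
  obtain ⟨xs, hxs1, hxs2⟩ := mem_closure_iff_seq_limit.1 (Completion.denseRange_coe p)
  obtain ⟨ys, hys1, hys2⟩ := mem_closure_iff_seq_limit.1 (Completion.denseRange_coe q)
  choose ps hps using hxs1
  choose qs hqs using hys1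
  have hps' : Tendsto (fun n => ((ps n : α) : Completion α)) atTop (𝓝 p) := by
    apply hxs2.congr
    intro n
    exact (hps n).symm
  have hqs' : Tendsto (fun n => ((qs n : α) : Completion α)) atTop (𝓝 q) := by
    apply hys2.congr
    intro n
    exact (hqs n).symm
  choose mu hmu1 hmu2 hmu3 using fun n => completion_mid_coe h (ps n) (qs n)
  set D := dist p q with hD
  have hD0 : 0 ≤ D := dist_nonneg
  have hDn : Tendsto (fun n => dist (ps n) (qs n)) atTop (𝓝 D) := by
    apply (hps'.dist hqs').congr
    intro n
    exact Completion.dist_eq _ _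
  have hmucauchy : CauchySeq mu := by
    rw [Metric.cauchySeq_iff]
    intro ε hε
    set κ := min 1 (ε^2/(8*(D+2))) with hκ
    have hκ0 : 0 < κ := lt_min one_pos (by positivity)
    have hκ1 : κ ≤ 1 := min_le_left _ _
    have hκ2 : κ*(8*(D+2)) ≤ ε^2 := by
      have h1 := min_le_right 1 (ε^2/(8*(D+2)))
      have hpos : (0:ℝ) < 8*(D+2) := by linarith
      calc κ*(8*(D+2)) ≤ (ε^2/(8*(D+2)))*(8*(D+2)) :=
        mul_le_mul_of_nonneg_right h1 (le_of_lt hpos)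
      _ = ε^2 := div_mul_cancel₀ _ (ne_of_gt hpos)
    obtain ⟨N₁, hN₁⟩ := Metric.cauchySeq_iff.1 hps'.cauchySeq κ hκ0
    obtain ⟨N₂, hN₂⟩ := Metric.cauchySeq_iff.1 hqs'.cauchySeq κ hκ0
    obtain ⟨N₃, hN₃⟩ := (Metric.tendsto_atTop.1 hDn) κ hκ0
    refine ⟨max N₁ (max N₂ N₃), fun n hn m hm' => ?_⟩
    have hn1 : N₁ ≤ n := le_trans (le_max_left _ _) hn
    have hn2 : N₂ ≤ n := le_trans (le_trans (le_max_left _ _) (le_max_right _ _)) hn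
    have hn3 : N₃ ≤ n := le_trans (le_trans (le_max_right _ _) (le_max_right _ _)) hn
    have hm1 : N₁ ≤ m := le_trans (le_max_left _ _) hm'
    have hm2 : N₂ ≤ m := le_trans (le_trans (le_max_left _ _) (le_max_right _ _)) hm'
    have hm3 : N₃ ≤ m := le_trans (le_trans (le_max_right _ _) (le_max_right _ _)) hm'
    have hDnD : |dist (ps n) (qs n) - D| < κ := by
      have := hN₃ n hn3
      rwa [Real.dist_eq] at this
    have hDmD : |dist (ps m) (qs m) - D| < κ := by
      have := hN₃ m hm3
      rwa [Real.dist_eq] at this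
    rw [abs_lt] at hDnD hDmD
    obtain ⟨hDnD1, hDnD2⟩ := hDnD
    obtain ⟨hDmD1, hDmD2⟩ := hDmD
    have hpp : dist ((ps n : α) : Completion α) ((ps m : α) : Completion α) < κ :=
      hN₁ n hn1 m hm1
    have hqq : dist ((qs n : α) : Completion α) ((qs m : α) : Completion α) < κ :=
      hN₂ n hn2 m hm2
    have hcn := hmu3 m (mu n)
    rw [Completion.dist_eq] at hcn
    have e1 : dist (mu n) ((ps m : α) : Completion α) ≤ dist (ps n) (qs n)/2 + κ := by
      have t1 := dist_triangle (mu n) ((ps n : α) : Completion α)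
        ((ps m : α) : Completion α)
      have t2 : dist (mu n) ((ps n : α) : Completion α) = dist (ps n) (qs n)/2 := by
        rw [dist_comm]
        exact hmu1 n
      rw [t2] at t1
      linarith
    have e2 : dist (mu n) ((qs m : α) : Completion α) ≤ dist (ps n) (qs n)/2 + κ := by
      have t1 := dist_triangle (mu n) ((qs n : α) : Completion α)
        ((qs m : α) : Completion α)
      have t2 : dist (mu n) ((qs n : α) : Completion α) = dist (ps n) (qs n)/2 :=
        hmu2 n
      rw [t2] at t1
      linarith
    set Dn := dist (ps n) (qs n)
    set Dm := dist (ps m) (qs m)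
    have hDn0 : 0 ≤ Dn := dist_nonneg
    have hDm0 : 0 ≤ Dm := dist_nonneg
    have hsq : dist (mu n) (mu m)^2 ≤ (Dn/2+κ)^2 - Dm^2/4 := by
      have hwp : 0 ≤ dist (mu n) ((ps m : α) : Completion α) := dist_nonneg
      have hwq : 0 ≤ dist (mu n) ((qs m : α) : Completion α) := dist_nonneg
      have hA2 : dist (mu n) ((ps m : α) : Completion α)^2 ≤ (Dn/2+κ)^2 := by
        nlinarith [e1, hwp]
      have hB2 : dist (mu n) ((qs m : α) : Completion α)^2 ≤ (Dn/2+κ)^2 := by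
        nlinarith [e2, hwq]
      linarith [hcn, hA2, hB2]
    have hfac : (Dn/2+κ)^2 - Dm^2/4 = (Dn+2*κ-Dm)*(Dn+2*κ+Dm)/4 := by ring
    have f1 : Dn + 2*κ - Dm ≤ 4*κ := by linarith
    have f2 : (0:ℝ) ≤ Dn + 2*κ + Dm := by linarith
    have f3 : Dn + 2*κ + Dm ≤ 2*D + 4 := by linarith
    have hprod : (Dn+2*κ-Dm)*(Dn+2*κ+Dm) ≤ (4*κ)*(2*D+4) := by
      calc (Dn+2*κ-Dm)*(Dn+2*κ+Dm) ≤ (4*κ)*(Dn+2*κ+Dm) :=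
        mul_le_mul_of_nonneg_right f1 f2
      _ ≤ (4*κ)*(2*D+4) := by
          apply mul_le_mul_of_nonneg_left f3 (by positivity)
    have hfin : dist (mu n) (mu m)^2 ≤ κ*(2*D+4) := by
      rw [hfac] at hsq
      linarith
    have hfin2 : dist (mu n) (mu m)^2 < ε^2 := by nlinarith
    nlinarith [dist_nonneg (x := mu n) (y := mu m), hε]
  obtain ⟨μ, hμ⟩ := cauchySeq_tendsto_of_complete hmucauchy
  have hpμ : dist p μ = D/2 := by
    have h1 : Tendsto (fun n => dist ((ps n : α) : Completion α) (mu n)) atTop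
        (𝓝 (dist p μ)) := hps'.dist hμ
    have h2 : Tendsto (fun n => dist ((ps n : α) : Completion α) (mu n)) atTop
        (𝓝 (D/2)) := by
      apply Tendsto.congr _ (hDn.div_const 2)
      intro n
      exact (hmu1 n).symm
    exact tendsto_nhds_unique h1 h2
  have hμq : dist μ q = D/2 := by
    have h1 : Tendsto (fun n => dist (mu n) ((qs n : α) : Completion α)) atTop
        (𝓝 (dist μ q)) := hμ.dist hqs'
    have h2 : Tendsto (fun n => dist (mu n) ((qs n : α) : Completion α)) atTop
        (𝓝 (D/2)) := by
      apply Tendsto.congr _ (hDn.div_const 2)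
      intro n
      exact (hmu2 n).symm
    exact tendsto_nhds_unique h1 h2
  refine ⟨μ, hpμ, hμq, ?_⟩
  intro w
  have hLHS : Tendsto (fun n => dist w (mu n)^2) atTop (𝓝 (dist w μ^2)) :=
    (tendsto_const_nhds.dist hμ).pow 2
  have hRHS : Tendsto (fun n =>
      (dist w ((ps n : α) : Completion α)^2 + dist w ((qs n : α) : Completion α)^2)/2
        - dist ((ps n : α) : Completion α) ((qs n : α) : Completion α)^2/4) atTop
      (𝓝 ((dist w p^2 + dist w q^2)/2 - dist p q^2/4)) := by
    apply Tendsto.sub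
    · apply Tendsto.div_const
      exact ((tendsto_const_nhds.dist hps').pow 2).add ((tendsto_const_nhds.dist hqs').pow 2)
    · exact Tendsto.div_const ((hps'.dist hqs').pow 2) 4
  apply le_of_tendsto_of_tendsto hLHS hRHS
  filter_upwards with n
  exact hmu3 n w

theorem completion_cat0 (h : MidHyp α) : CAT0 (UniformSpace.Completion α) := by
  intro x y z m hm1 hm2
  obtain ⟨μ, hμ1, hμ2, hμ3⟩ := completion_mid h y z
  have h1 := hμ3 m
  have hmy : dist m y = dist y z / 2 := by rw [dist_comm]; exact hm1
  have hmμ : m = μ := by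
    apply eq_of_dist_eq_zero
    have h2 : dist m μ^2 ≤ 0 := by
      rw [hmy, hm2] at h1
      nlinarith [h1]
    nlinarith [dist_nonneg (x := m) (y := μ)]
  rw [hmμ]
  exact hμ3 x

theorem completion_geodesic (h : MidHyp α) : GeodesicSpace (UniformSpace.Completion α) := by
  have hmidfun : ∀ p q : UniformSpace.Completion α, ∃ m,
      dist p m = dist p q/2 ∧ dist m q = dist p q/2 :=
    fun p q => (completion_mid h p q).imp fun m hm => ⟨hm.1, hm.2.1⟩
  choose mid h1 h2 using hmidfun
  exact geodesic_of_midpoints inferInstance mid (fun a b => ⟨h1 a b, h2 a b⟩)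

end CompletionCAT0

end CAT0Geo

namespace CAT0Geo

/-- Spaces of strong asymptote classes.
Let `X` be a Hadamard space and `ξ ∈ ∂∞X`.  On the set of geodesic rays
asymptotic to `ξ`, the asymptotic distance
`d_ξ(ρ₁,ρ₂) = inf_{t₁,t₂} d(ρ₁(t₁),ρ₂(t₂))` induces a metric on the set
`X*_ξ` of strong asymptote classes, and the metric completion `X_ξ` of
`X*_ξ` is a Hadamard space.  (We formalize the completion of the induced
metric as a complete metric space `Xξ` together with a map `j` from the rays
asymptotic to `ξ` which realizes exactly the asymptotic distance — thereby
`j` factors through the set of strong asymptote classes and embeds it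
isometrically — and which has dense range.) -/
theorem strong_asymptote_space_is_hadamard {X : Type u} [MetricSpace X]
    (hHad : HadamardSpace X) (ξ : IdealBoundary X) :
    ∃ (Xξ : Type u) (iXξ : MetricSpace Xξ) (j : raysTo ξ → Xξ),
      (∀ ρ₁ ρ₂ : raysTo ξ,
        @dist Xξ iXξ.toPseudoMetricSpace.toDist (j ρ₁) (j ρ₂) =
          asympDistRays ρ₁.1.1 ρ₂.1.1) ∧
      @DenseRange Xξ (mtop iXξ) (raysTo ξ) j ∧
      @HadamardSpace Xξ iXξ := by
  obtain ⟨σ₀, hσ₀'⟩ := Quot.exists_rep ξ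
  have hσ₀ : rayClass σ₀ = ξ := hσ₀'
  have hC := hHad.cat0
  have hG := hHad.geodesic
  have hcpl := hHad.complete
  letI iP : PseudoMetricSpace (raysTo ξ) :=
    { dist := fun ρ τ => dxi ρ τ
      dist_self := dxi_self
      dist_comm := dxi_comm
      dist_triangle := fun a b c => dxi_triangle hC hG hcpl σ₀ hσ₀ a b c }
  have hMH : MidHyp (raysTo ξ) := by
    intro p q
    obtain ⟨ms, h1, h2⟩ := mid_seq hC hG hcpl σ₀ hσ₀ p q
    exact ⟨ms, h1, h2⟩
  refine ⟨UniformSpace.Completion (raysTo ξ), inferInstance,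
    fun ρ => (ρ : UniformSpace.Completion (raysTo ξ)), ?_, ?_, ?_⟩
  · intro ρ₁ ρ₂
    exact UniformSpace.Completion.dist_eq ρ₁ ρ₂
  · exact UniformSpace.Completion.denseRange_coe
  · exact ⟨inferInstance, completion_geodesic hMH, completion_cat0 hMH⟩


end CAT0Geo
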